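/- arXiv:1511.09455 — 4 statements merged into one kernel-verified Lean document; each statement's English description precedes it below -/
import Mathlib

section
/- Let N(x,y) = Σ_{a,b≥0} N_{a,b} x^a y^b/(a! b!) in ℚ[[x,y]], where N_{a,b} is the number of non-ambiguous trees (over all nonempty binary tree shapes) with exactly a left children and b right children, and set L := x + y + ∫_x ∫_y N. Then ∂_x ∂_y L = (∂_x L) · (∂_y L), where ∂_x, ∂_y are formal partial derivatives and ∫_x, ∫_y formal integrations of power series. -/
inductive BT : Type where
  | nil : BT
  | node : BT → BT → BT
  deriving DecidableEq

namespace BT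

/-- The list of positions (paths from the root, `false` = left step, `true` = right step)
of the vertices of a binary tree. -/
def paths : BT → List (List Bool)
  | .nil => []
  | .node l r => [] :: (l.paths.map (List.cons false) ++ r.paths.map (List.cons true))

/-- Number of vertices. -/
def size (B : BT) : ℕ := B.paths.length

/-- The set of left children (positions ending with a left step). -/
def leftVertices (B : BT) : Finset (List Bool) :=
  B.paths.toFinset.filter (fun p => p.getLast? = some false)

/-- The set of right children (positions ending with a right step). -/
def rightVertices (B : BT) : Finset (List Bool) :=
  B.paths.toFinset.filter (fun p => p.getLast? = some true)

end BT

/-- A non-ambiguous tree of shape `B`: bijective labellings of the left (resp. right)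
children by `Fin |LV B|` (resp. `Fin |RV B|`), decreasing along ancestry. -/
structure NAT (B : BT) where
  fL : {p // p ∈ B.leftVertices} → Fin B.leftVertices.card
  fR : {p // p ∈ B.rightVertices} → Fin B.rightVertices.card
  bijL : Function.Bijective fL
  bijR : Function.Bijective fR
  ancL : ∀ u v : {p // p ∈ B.leftVertices}, u.1 <+: v.1 → u ≠ v → (fL v : ℕ) < fL u
  ancR : ∀ u v : {p // p ∈ B.rightVertices}, u.1 <+: v.1 → u ≠ v → (fR v : ℕ) < fR u

/-- `natCount a b`: the number of non-ambiguous trees (over all nonempty shapes)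
with exactly `a` left children and `b` right children. -/
noncomputable def natCount (a b : ℕ) : ℕ :=
  Nat.card {T : Σ B : BT, NAT B //
    T.1 ≠ BT.nil ∧ T.1.leftVertices.card = a ∧ T.1.rightVertices.card = b}

/-- The doubly exponential generating series `N(x,y) = Σ N_{a,b} x^a y^b/(a! b!)`. -/
noncomputable def natGF : MvPowerSeries (Fin 2) ℚ :=
  fun e => (natCount (e 0) (e 1) : ℚ) / ((e 0).factorial * (e 1).factorial)

/-- Formal integration with respect to `x` (the variable of index `0`). -/
noncomputable def intX (f : MvPowerSeries (Fin 2) ℚ) : MvPowerSeries (Fin 2) ℚ :=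
  fun e => if e 0 = 0 then 0 else f (e - Finsupp.single 0 1) / (e 0 : ℚ)

/-- Formal integration with respect to `y` (the variable of index `1`). -/
noncomputable def intY (f : MvPowerSeries (Fin 2) ℚ) : MvPowerSeries (Fin 2) ℚ :=
  fun e => if e 1 = 0 then 0 else f (e - Finsupp.single 1 1) / (e 1 : ℚ)


/-- Formal partial derivative with respect to `x` (the variable of index `0`). -/
noncomputable def dX (f : MvPowerSeries (Fin 2) ℚ) : MvPowerSeries (Fin 2) ℚ :=
  fun e => ((e 0 : ℚ) + 1) * f (e + Finsupp.single 0 1)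

/-- Formal partial derivative with respect to `y` (the variable of index `1`). -/
noncomputable def dY (f : MvPowerSeries (Fin 2) ℚ) : MvPowerSeries (Fin 2) ℚ :=
  fun e => ((e 1 : ℚ) + 1) * f (e + Finsupp.single 1 1)

/-- `L := x + y + ∫ₓ ∫_y N`. -/
noncomputable def natL : MvPowerSeries (Fin 2) ℚ :=
  MvPowerSeries.X 0 + MvPowerSeries.X 1 + intX (intY natGF)

namespace BT

lemma nil_mem_paths_iff (B : BT) : [] ∈ B.paths ↔ B ≠ nil := by
  cases B <;> simp [paths]

lemma ne_nil_of_mem_LV {B : BT} {p : List Bool} (h : p ∈ B.leftVertices) : p ≠ [] := by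
  rintro rfl; simp [leftVertices] at h

lemma ne_nil_of_mem_RV {B : BT} {p : List Bool} (h : p ∈ B.rightVertices) : p ≠ [] := by
  rintro rfl; simp [rightVertices] at h

lemma LV_nil : (nil).leftVertices = ∅ := rfl
lemma RV_nil : (nil).rightVertices = ∅ := rfl

lemma getLast?_cons_ne {α : Type*} (x : α) {q : List α} (h : q ≠ []) :
    (x :: q).getLast? = q.getLast? := by
  cases q with
  | nil => exact absurd rfl h
  | cons y t => exact List.getLast?_cons_cons

/-- Generic description of the children sets of `node l r`, where `c` is the last-step value. -/
lemma filter_node (l r : BT) (c : Bool) :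
    ((node l r).paths.toFinset.filter (fun p => p.getLast? = some c)) =
    ((if l = nil then ∅ else ({[false]} : Finset (List Bool)).filter (fun _ => c = false))
        ∪ (l.paths.toFinset.filter (fun p => p.getLast? = some c)).image (List.cons false))
      ∪ ((if r = nil then ∅ else ({[true]} : Finset (List Bool)).filter (fun _ => c = true))
        ∪ (r.paths.toFinset.filter (fun p => p.getLast? = some c)).image (List.cons true)) := by
  ext p
  simp only [Finset.mem_filter, List.mem_toFinset, paths, List.mem_cons,
    List.mem_append, List.mem_map, Finset.mem_union, Finset.mem_image]
  constructor
  · rintro ⟨rfl | ⟨q, hq, rfl⟩ | ⟨q, hq, rfl⟩, hlast⟩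
    · simp at hlast
    · rcases eq_or_ne q [] with rfl | hne
      · simp only [List.getLast?_singleton, Option.some.injEq] at hlast
        have hl : l ≠ nil := (nil_mem_paths_iff l).1 hq
        left; left
        simp [hl, hlast.symm]
      · left; right
        exact ⟨q, ⟨hq, by rwa [getLast?_cons_ne _ hne] at hlast⟩, rfl⟩
    · rcases eq_or_ne q [] with rfl | hne
      · simp only [List.getLast?_singleton, Option.some.injEq] at hlast
        have hr : r ≠ nil := (nil_mem_paths_iff r).1 hq
        right; left
        simp [hr, hlast.symm]
      · right; right
        exact ⟨q, ⟨hq, by rwa [getLast?_cons_ne _ hne] at hlast⟩, rfl⟩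
  · rintro ((h | ⟨q, ⟨hq, hlast⟩, rfl⟩) | (h | ⟨q, ⟨hq, hlast⟩, rfl⟩))
    · by_cases hl : l = nil
      · simp [hl] at h
      · simp only [hl, if_false, Finset.mem_filter, Finset.mem_singleton] at h
        obtain ⟨rfl, hc⟩ := h
        refine ⟨Or.inr (Or.inl ⟨[], (nil_mem_paths_iff l).2 hl, rfl⟩), by simp [hc]⟩
    · have hne : q ≠ [] := by rintro rfl; simp at hlast
      exact ⟨Or.inr (Or.inl ⟨q, hq, rfl⟩), by rwa [getLast?_cons_ne _ hne]⟩
    · by_cases hr : r = nil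
      · simp [hr] at h
      · simp only [hr, if_false, Finset.mem_filter, Finset.mem_singleton] at h
        obtain ⟨rfl, hc⟩ := h
        refine ⟨Or.inr (Or.inr ⟨[], (nil_mem_paths_iff r).2 hr, rfl⟩), by simp [hc]⟩
    · have hne : q ≠ [] := by rintro rfl; simp at hlast
      exact ⟨Or.inr (Or.inr ⟨q, hq, rfl⟩), by rwa [getLast?_cons_ne _ hne]⟩

lemma LV_node (l r : BT) : (node l r).leftVertices =
    ((if l = nil then ∅ else {[false]}) ∪ l.leftVertices.image (List.cons false))
      ∪ r.leftVertices.image (List.cons true) := by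
  have h := filter_node l r false
  simp only [leftVertices]
  rw [h]
  split_ifs <;> simp

lemma RV_node (l r : BT) : (node l r).rightVertices =
    (l.rightVertices.image (List.cons false))
      ∪ ((if r = nil then ∅ else {[true]}) ∪ r.rightVertices.image (List.cons true)) := by
  have h := filter_node l r true
  simp only [rightVertices]
  rw [h]
  split_ifs <;> simp

end BT


/-- Decreasing labellings of a finite set of positions by `Fin S.card`. -/
def DecLab (S : Finset (List Bool)) : Type :=
  {f : {p // p ∈ S} → Fin S.card // Function.Bijective f ∧
    ∀ u v : {p // p ∈ S}, u.1 <+: v.1 → u ≠ v → (f v : ℕ) < f u}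

instance (S : Finset (List Bool)) : Finite (DecLab S) := Subtype.finite

namespace DecLab


/-- Transport of decreasing labellings along a prefix-order-preserving equivalence. -/
noncomputable def congrEquiv {S T : Finset (List Bool)} (e : {p // p ∈ S} ≃ {q // q ∈ T})
    (he : ∀ u v : {p // p ∈ S}, u.1 <+: v.1 ↔ (e u).1 <+: (e v).1) :
    DecLab T ≃ DecLab S := by
  have hcard : T.card = S.card := by
    rw [← Fintype.card_coe, ← Fintype.card_coe]
    exact (Fintype.card_congr e).symm
  refine Equiv.ofBijective (fun f => ⟨fun p => Fin.cast hcard (f.1 (e p)), ?_, ?_⟩) ⟨?_, ?_⟩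
  · exact (finCongr hcard).bijective.comp (f.2.1.comp e.bijective)
  · intro u v hp hne
    exact f.2.2 (e u) (e v) ((he u v).1 hp) (fun h => hne (e.injective h))
  · intro f g h
    apply Subtype.ext; funext q
    have := congrFun (congrArg Subtype.val h) (e.symm q)
    simp only at this
    have := congrArg Fin.val this
    apply Fin.ext
    simpa using this
  · intro f
    refine ⟨⟨fun q => Fin.cast hcard.symm (f.1 (e.symm q)), ?_, ?_⟩, ?_⟩
    · exact (finCongr hcard.symm).bijective.comp (f.2.1.comp e.symm.bijective)
    · intro u v hp hne
      refine f.2.2 (e.symm u) (e.symm v) ?_ (fun h => hne (e.symm.injective h))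
      have := (he (e.symm u) (e.symm v))
      simpa using this.2 (by simpa using hp)
    · apply Subtype.ext; funext p
      apply Fin.ext
      simp

/-- Relabelling positions by prepending a fixed step. -/
noncomputable def consEquiv (x : Bool) (S : Finset (List Bool)) :
    DecLab (S.image (List.cons x)) ≃ DecLab S := by
  refine congrEquiv (Equiv.ofBijective
    (fun p => ⟨x :: p.1, Finset.mem_image_of_mem _ p.2⟩) ⟨?_, ?_⟩) ?_
  · intro u v h
    have : x :: u.1 = x :: v.1 := congrArg Subtype.val h
    exact Subtype.ext (by injection this)
  · rintro ⟨q, hq⟩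
    obtain ⟨p, hp, rfl⟩ := Finset.mem_image.1 hq
    exact ⟨⟨p, hp⟩, rfl⟩
  · intro u v
    constructor
    · intro h; exact (List.cons_prefix_cons).2 ⟨rfl, h⟩
    · intro h; exact ((List.cons_prefix_cons).1 h).2

/-- Adding a root below everything does not change the number of labellings. -/
noncomputable def insertEquiv (r : List Bool) (S : Finset (List Bool))
    (hr : r ∉ S) (hpre : ∀ q ∈ S, r <+: q) :
    DecLab S ≃ DecLab (insert r S) := by
  have hcard : (insert r S).card = S.card + 1 := Finset.card_insert_of_notMem hr
  have hmem : ∀ v : {p // p ∈ insert r S}, v.1 ≠ r → v.1 ∈ S := by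
    intro v hv
    rcases Finset.mem_insert.1 v.2 with h | h
    · exact absurd h hv
    · exact h
  refine Equiv.ofBijective (fun f => ⟨fun v =>
    Fin.cast hcard.symm (if hv : v.1 = r then Fin.last S.card
      else (f.1 ⟨v.1, hmem v hv⟩).castSucc), ?_, ?_⟩) ⟨?_, ?_⟩
  · rw [Fintype.bijective_iff_injective_and_card]
    constructor
    · intro u v h
      have h' := congrArg Fin.val h
      simp only [Fin.coe_cast] at h'
      by_cases hu : u.1 = r <;> by_cases hv : v.1 = r
      · exact Subtype.ext (hu.trans hv.symm)
      · rw [dif_pos hu, dif_neg hv] at h'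
        have := (f.1 ⟨v.1, hmem v hv⟩).2
        simp only [Fin.val_last, Fin.coe_castSucc] at h'
        omega
      · rw [dif_neg hu, dif_pos hv] at h'
        have := (f.1 ⟨u.1, hmem u hu⟩).2
        simp only [Fin.val_last, Fin.coe_castSucc] at h'
        omega
      · rw [dif_neg hu, dif_neg hv] at h'
        simp only [Fin.coe_castSucc] at h'
        have := f.2.1.1 (Fin.ext h')
        exact Subtype.ext (by simpa using this)
    · simp [Fintype.card_coe]
  · intro u v hp hne
    have hne' : u.1 ≠ v.1 := fun h => hne (Subtype.ext h)
    by_cases hu : u.1 = r <;> by_cases hv : v.1 = r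
    · exact absurd (hu.trans hv.symm) hne'
    · simp only [dif_pos hu, dif_neg hv, Fin.coe_cast, Fin.val_last, Fin.coe_castSucc]
      exact (f.1 ⟨v.1, hmem v hv⟩).2
    · exfalso
      apply hne'
      rw [hv] at hp ⊢
      exact hp.sublist.antisymm (hpre u.1 (hmem u hu)).sublist
    · simp only [dif_neg hu, dif_neg hv, Fin.coe_cast, Fin.coe_castSucc]
      exact f.2.2 ⟨u.1, hmem u hu⟩ ⟨v.1, hmem v hv⟩ hp
        (fun h => hne' (by simpa using h))
  · intro f g h
    apply Subtype.ext; funext p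
    have := congrFun (congrArg Subtype.val h) ⟨p.1, Finset.mem_insert_of_mem p.2⟩
    simp only at this
    have hp : (p : List Bool) ≠ r := fun hh => hr (hh ▸ p.2)
    rw [dif_neg hp, dif_neg hp] at this
    have h2 := congrArg Fin.val this
    simp only [Fin.coe_cast, Fin.coe_castSucc] at h2
    exact Fin.ext h2
  · intro f
    have hrmem : r ∈ insert r S := Finset.mem_insert_self r S
    have htop : ∀ v : {p // p ∈ insert r S}, v.1 ≠ r → (f.1 v : ℕ) < f.1 ⟨r, hrmem⟩ := by
      intro v hv
      exact f.2.2 ⟨r, hrmem⟩ v (hpre v.1 (hmem v hv))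
        (fun h => hv (Subtype.ext_iff.1 h).symm)
    have hub : ∀ v : {p // p ∈ insert r S}, (f.1 v : ℕ) < S.card + 1 := by
      intro v
      exact lt_of_lt_of_le (f.1 v).2 (le_of_eq hcard)
    have hlt : ∀ v : {p // p ∈ insert r S}, v.1 ≠ r → (f.1 v : ℕ) < S.card := by
      intro v hv
      have h1 := htop v hv
      have h2 := hub ⟨r, hrmem⟩
      omega
    refine ⟨⟨fun p => ⟨(f.1 ⟨p.1, Finset.mem_insert_of_mem p.2⟩ : ℕ),
        hlt _ (fun hh => hr (hh ▸ p.2))⟩, ?_, ?_⟩, ?_⟩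
    · rw [Fintype.bijective_iff_injective_and_card]
      constructor
      · intro u v h
        simp only [Fin.mk.injEq] at h
        have := f.2.1.1 (Fin.ext h)
        exact Subtype.ext (by simpa using this)
      · simp [Fintype.card_coe]
    · intro u v hp hne
      exact f.2.2 ⟨u.1, Finset.mem_insert_of_mem u.2⟩ ⟨v.1, Finset.mem_insert_of_mem v.2⟩ hp
        (fun h => hne (Subtype.ext (by simpa using h)))
    · apply Subtype.ext; funext v
      apply Fin.ext
      by_cases hv : v.1 = r
      · simp only [dif_pos hv, Fin.coe_cast, Fin.val_last]
        have hvr : v = ⟨r, hrmem⟩ := Subtype.ext hv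
        rw [hvr]
        have hub' : (f.1 ⟨r, hrmem⟩ : ℕ) ≤ S.card := Nat.lt_succ_iff.1 (hub ⟨r, hrmem⟩)
        rcases lt_or_eq_of_le hub' with h | h
        · exfalso
          obtain ⟨w, hw⟩ := f.2.1.2 (Fin.cast hcard.symm (Fin.last S.card))
          have hwval := congrArg Fin.val hw
          simp only [Fin.coe_cast, Fin.val_last] at hwval
          by_cases hwr : w.1 = r
          · have : w = ⟨r, hrmem⟩ := Subtype.ext hwr
            rw [this] at hwval
            omega
          · have h1 := htop w hwr
            omega
        · exact h.symm
      · simp only [dif_neg hv, Fin.coe_cast, Fin.coe_castSucc]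



/-- Splitting a union with no cross-prefix relations. -/
noncomputable def splitEquiv (A B : Finset (List Bool)) (hd : Disjoint A B)
    (hAB : ∀ p ∈ A, ∀ q ∈ B, ¬ p <+: q) (hBA : ∀ p ∈ A, ∀ q ∈ B, ¬ q <+: p) :
    ({s : Finset (Fin (A ∪ B).card) // s.card = A.card} × DecLab A × DecLab B)
      ≃ DecLab (A ∪ B) := by
  have hn : (A ∪ B).card = A.card + B.card := Finset.card_union_of_disjoint hd
  have hcompl : ∀ (s : Finset (Fin (A ∪ B).card)), s.card = A.card →
      (sᶜ : Finset (Fin (A ∪ B).card)).card = B.card := by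
    intro s hs
    rw [Finset.card_compl, hs]
    simp [hn]
  have hBmem : ∀ v : {p // p ∈ A ∪ B}, v.1 ∉ A → v.1 ∈ B := by
    intro v hv
    rcases Finset.mem_union.1 v.2 with h | h
    · exact absurd h hv
    · exact h
  refine Equiv.ofBijective (fun d => ⟨fun v =>
    if hv : v.1 ∈ A then ((d.1.1.orderIsoOfFin d.1.2) (d.2.1.1 ⟨v.1, hv⟩)).1
    else (((d.1.1ᶜ).orderIsoOfFin (hcompl d.1.1 d.1.2)) (d.2.2.1 ⟨v.1, hBmem v hv⟩)).1, ?_, ?_⟩)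
    ⟨?_, ?_⟩
  · -- bijectivity of the constructed labelling
    rw [Fintype.bijective_iff_injective_and_card]
    refine ⟨?_, by simp [Fintype.card_coe]⟩
    intro u v h
    by_cases hu : u.1 ∈ A <;> by_cases hv : v.1 ∈ A
    · simp only [dif_pos hu, dif_pos hv] at h
      have h1 := (d.1.1.orderIsoOfFin d.1.2).injective (Subtype.ext h)
      have h2 := d.2.1.2.1.1 h1
      exact Subtype.ext (by simpa using h2)
    · simp only [dif_pos hu, dif_neg hv] at h
      exfalso
      have m1 := ((d.1.1.orderIsoOfFin d.1.2) (d.2.1.1 ⟨u.1, hu⟩)).2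
      have m2 := (((d.1.1ᶜ).orderIsoOfFin (hcompl d.1.1 d.1.2)) (d.2.2.1 ⟨v.1, hBmem v hv⟩)).2
      rw [← h] at m2
      exact (Finset.mem_compl.1 m2) m1
    · simp only [dif_neg hu, dif_pos hv] at h
      exfalso
      have m1 := ((d.1.1.orderIsoOfFin d.1.2) (d.2.1.1 ⟨v.1, hv⟩)).2
      have m2 := (((d.1.1ᶜ).orderIsoOfFin (hcompl d.1.1 d.1.2)) (d.2.2.1 ⟨u.1, hBmem u hu⟩)).2
      rw [h] at m2
      exact (Finset.mem_compl.1 m2) m1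
    · simp only [dif_neg hu, dif_neg hv] at h
      have h1 := ((d.1.1ᶜ).orderIsoOfFin (hcompl d.1.1 d.1.2)).injective (Subtype.ext h)
      have h2 := d.2.2.2.1.1 h1
      exact Subtype.ext (by simpa using h2)
  · -- decreasing property
    intro u v hp hne
    have hne' : u.1 ≠ v.1 := fun h => hne (Subtype.ext h)
    by_cases hu : u.1 ∈ A <;> by_cases hv : v.1 ∈ A
    · simp only [dif_pos hu, dif_pos hv]
      have hlt := d.2.1.2.2 ⟨u.1, hu⟩ ⟨v.1, hv⟩ hp (fun h => hne' (by simpa using h))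
      exact (d.1.1.orderIsoOfFin d.1.2).strictMono hlt
    · exact absurd hp (hAB u.1 hu v.1 (hBmem v hv))
    · exact absurd hp (hBA v.1 hv u.1 (hBmem u hu))
    · simp only [dif_neg hu, dif_neg hv]
      have hlt := d.2.2.2.2 ⟨u.1, hBmem u hu⟩ ⟨v.1, hBmem v hv⟩ hp
        (fun h => hne' (by simpa using h))
      exact ((d.1.1ᶜ).orderIsoOfFin (hcompl d.1.1 d.1.2)).strictMono hlt
  · -- injectivity
    rintro ⟨⟨s, hs⟩, fA, fB⟩ ⟨⟨t, ht⟩, gA, gB⟩ h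
    have hfun := congrArg Subtype.val h
    simp only at hfun
    have hst : s = t := by
      have hsub : s ⊆ t := by
        intro x hx
        obtain ⟨y, hy⟩ := fA.2.1.2 ((s.orderIsoOfFin hs).symm ⟨x, hx⟩)
        have hx' : x = ((s.orderIsoOfFin hs) (fA.1 y)).1 := by
          rw [hy]; simp
        have hmemA : (y.1 : List Bool) ∈ A := y.2
        have := congrFun hfun ⟨y.1, Finset.mem_union_left _ y.2⟩
        simp only [dif_pos hmemA] at this
        have hyy : fA.1 ⟨y.1, hmemA⟩ = fA.1 y := by congr
        rw [hyy] at this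
        rw [hx', this]
        exact ((t.orderIsoOfFin ht) (gA.1 ⟨y.1, hmemA⟩)).2
      exact Finset.eq_of_subset_of_card_le hsub ((ht.trans hs.symm).le)
    subst hst
    have hfA : fA = gA := by
      apply Subtype.ext; funext y
      have := congrFun hfun ⟨y.1, Finset.mem_union_left _ y.2⟩
      simp only [dif_pos (show (y.1 : List Bool) ∈ A from y.2)] at this
      have h1 := (s.orderIsoOfFin hs).injective (Subtype.ext this)
      have hyy : (⟨y.1, y.2⟩ : {p // p ∈ A}) = y := Subtype.ext rfl
      rwa [hyy] at h1
    have hfB : fB = gB := by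
      apply Subtype.ext; funext y
      have hmemU : (y.1 : List Bool) ∈ A ∪ B := Finset.mem_union_right _ y.2
      have hnotA : (y.1 : List Bool) ∉ A := fun hh => (Finset.disjoint_left.1 hd) hh y.2
      have := congrFun hfun ⟨y.1, hmemU⟩
      simp only [dif_neg hnotA] at this
      have h1 := ((sᶜ).orderIsoOfFin (hcompl s hs)).injective (Subtype.ext this)
      have hyy : (⟨y.1, hBmem ⟨y.1, hmemU⟩ hnotA⟩ : {p // p ∈ B}) = y := Subtype.ext rfl
      rwa [hyy] at h1
    have : (⟨s, hs⟩ : {s : Finset (Fin (A ∪ B).card) // s.card = A.card}) = ⟨s, ht⟩ := rfl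
    simp [hfA, hfB]
  · -- surjectivity
    intro f
    have hinjA : Function.Injective
        (fun a : {p // p ∈ A} => f.1 ⟨a.1, Finset.mem_union_left _ a.2⟩) := by
      intro u v h
      have := f.2.1.1 h
      exact Subtype.ext (by simpa using this)
    set s : Finset (Fin (A ∪ B).card) :=
      Finset.image (fun a : {p // p ∈ A} => f.1 ⟨a.1, Finset.mem_union_left _ a.2⟩)
        Finset.univ with hs_def
    have hs : s.card = A.card := by
      rw [hs_def, Finset.card_image_of_injective _ hinjA, Finset.card_univ, Fintype.card_coe]
    have hmemsA : ∀ a : {p // p ∈ A}, f.1 ⟨a.1, Finset.mem_union_left _ a.2⟩ ∈ s := by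
      intro a
      rw [hs_def]
      exact Finset.mem_image_of_mem _ (Finset.mem_univ a)
    have hmemsB : ∀ b : {p // p ∈ B}, f.1 ⟨b.1, Finset.mem_union_right _ b.2⟩ ∈ sᶜ := by
      intro b
      rw [Finset.mem_compl, hs_def]
      intro hcontra
      rw [Finset.mem_image] at hcontra
      obtain ⟨a, _, ha⟩ := hcontra
      have := f.2.1.1 ha
      have hab : (a.1 : List Bool) = b.1 := by simpa using this
      exact (Finset.disjoint_left.1 hd) (hab ▸ a.2) b.2
    refine ⟨⟨⟨s, hs⟩,
      ⟨fun a => (s.orderIsoOfFin hs).symm ⟨f.1 ⟨a.1, Finset.mem_union_left _ a.2⟩, hmemsA a⟩,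
        ?_, ?_⟩,
      ⟨fun b => ((sᶜ).orderIsoOfFin (hcompl s hs)).symm
          ⟨f.1 ⟨b.1, Finset.mem_union_right _ b.2⟩, hmemsB b⟩, ?_, ?_⟩⟩, ?_⟩
    · rw [Fintype.bijective_iff_injective_and_card]
      refine ⟨?_, by simp [Fintype.card_coe]⟩
      intro u v h
      have h1 := (s.orderIsoOfFin hs).symm.injective h
      have h2 := f.2.1.1 (Subtype.ext_iff.1 h1)
      exact Subtype.ext (by simpa using h2)
    · intro u v hp hne
      have hlt := f.2.2 ⟨u.1, Finset.mem_union_left _ u.2⟩ ⟨v.1, Finset.mem_union_left _ v.2⟩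
        hp (fun hh => hne (Subtype.ext (by simpa using hh)))
      have : (⟨f.1 ⟨v.1, _⟩, hmemsA v⟩ : {x // x ∈ s}) < ⟨f.1 ⟨u.1, _⟩, hmemsA u⟩ := by
        rw [Subtype.mk_lt_mk]
        exact hlt
      exact (s.orderIsoOfFin hs).symm.strictMono this
    · rw [Fintype.bijective_iff_injective_and_card]
      refine ⟨?_, by simp [Fintype.card_coe]⟩
      intro u v h
      have h1 := ((sᶜ).orderIsoOfFin (hcompl s hs)).symm.injective h
      have h2 := f.2.1.1 (Subtype.ext_iff.1 h1)
      exact Subtype.ext (by simpa using h2)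
    · intro u v hp hne
      have hlt := f.2.2 ⟨u.1, Finset.mem_union_right _ u.2⟩ ⟨v.1, Finset.mem_union_right _ v.2⟩
        hp (fun hh => hne (Subtype.ext (by simpa using hh)))
      have : (⟨f.1 ⟨v.1, _⟩, hmemsB v⟩ : {x // x ∈ (sᶜ : Finset (Fin (A ∪ B).card))}) <
          ⟨f.1 ⟨u.1, _⟩, hmemsB u⟩ := by
        rw [Subtype.mk_lt_mk]
        exact hlt
      exact ((sᶜ).orderIsoOfFin (hcompl s hs)).symm.strictMono this
    · apply Subtype.ext; funext v
      by_cases hv : v.1 ∈ A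
      · simp only [dif_pos hv]
        rw [OrderIso.apply_symm_apply]
      · simp only [dif_neg hv]
        rw [OrderIso.apply_symm_apply]


end DecLab


-- Part D : cardinality lemmas for DecLab over the vertex sets, and NAT counts
section PartD
open BT

/-- The NAT structure (from the problem statement), restated here only for development;
in the final file it is already present. -/
def natEquiv (B : BT) : NAT B ≃ DecLab B.leftVertices × DecLab B.rightVertices where
  toFun n := (⟨n.fL, n.bijL, n.ancL⟩, ⟨n.fR, n.bijR, n.ancR⟩)
  invFun p := ⟨p.1.1, p.2.1, p.1.2.1, p.2.2.1, p.1.2.2, p.2.2.2⟩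
  left_inv n := rfl
  right_inv p := rfl

instance (B : BT) : Finite (NAT B) := Finite.of_equiv _ (natEquiv B).symm

namespace DecLab

lemma card_empty : Nat.card (DecLab (∅ : Finset (List Bool))) = 1 := by
  have : Nonempty (DecLab (∅ : Finset (List Bool))) := by
    refine ⟨⟨fun p => absurd p.2 (Finset.notMem_empty _), ⟨?_, ?_⟩, ?_⟩⟩
    · intro u; exact absurd u.2 (Finset.notMem_empty _)
    · intro x; exact absurd x.2 (by simp)
    · intro u; exact absurd u.2 (Finset.notMem_empty _)
  have hsub : Subsingleton (DecLab (∅ : Finset (List Bool))) := by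
    constructor
    intro f g
    apply Subtype.ext; funext p
    exact absurd p.2 (Finset.notMem_empty _)
  exact Nat.card_eq_one_iff_unique.2 ⟨hsub, this⟩

lemma card_cons (x : Bool) (S : Finset (List Bool)) :
    Nat.card (DecLab (S.image (List.cons x))) = Nat.card (DecLab S) :=
  Nat.card_congr (consEquiv x S)

lemma card_insert_nil (S : Finset (List Bool)) (h : ([] : List Bool) ∉ S) :
    Nat.card (DecLab (insert ([] : List Bool) S)) = Nat.card (DecLab S) :=
  (Nat.card_congr (insertEquiv [] S h (fun q _ => List.nil_prefix))).symm

lemma no_cross {x y : Bool} (hxy : x ≠ y) (X Y : Finset (List Bool)) :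
    ∀ p ∈ X.image (List.cons x), ∀ q ∈ Y.image (List.cons y), ¬ p <+: q := by
  intro p hp q hq hpre
  obtain ⟨p', _, rfl⟩ := Finset.mem_image.1 hp
  obtain ⟨q', _, rfl⟩ := Finset.mem_image.1 hq
  exact hxy ((List.cons_prefix_cons.1 hpre).1)

lemma disj {x y : Bool} (hxy : x ≠ y) (X Y : Finset (List Bool)) :
    Disjoint (X.image (List.cons x)) (Y.image (List.cons y)) := by
  rw [Finset.disjoint_left]
  intro p hp hq
  obtain ⟨p', _, rfl⟩ := Finset.mem_image.1 hp
  obtain ⟨q', _, h⟩ := Finset.mem_image.1 hq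
  exact hxy (by injection h.symm)

/-- Cardinality of labellings of a two-sided union. -/
lemma card_union (X Y : Finset (List Bool)) :
    Nat.card (DecLab ((X.image (List.cons false)) ∪ (Y.image (List.cons true)))) =
      ((X.card + Y.card).choose X.card) * Nat.card (DecLab X) * Nat.card (DecLab Y) := by
  have hd := disj (by simp : (false ≠ true)) X Y
  have h1 := Nat.card_congr (splitEquiv _ _ hd
    (no_cross (by simp) X Y) (fun p hp q hq hpre => no_cross (by simp) Y X q hq p hp hpre)).symm
  rw [h1, Nat.card_prod, Nat.card_prod]
  have hcx : (X.image (List.cons false)).card = X.card :=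
    Finset.card_image_of_injective _ (fun a b h => by injection h)
  have hcy : (Y.image (List.cons true)).card = Y.card :=
    Finset.card_image_of_injective _ (fun a b h => by injection h)
  have hcu : ((X.image (List.cons false)) ∪ (Y.image (List.cons true))).card = X.card + Y.card := by
    rw [Finset.card_union_of_disjoint hd, hcx, hcy]
  rw [Nat.card_eq_fintype_card]
  have : Fintype.card {s : Finset (Fin ((X.image (List.cons false)) ∪
      (Y.image (List.cons true))).card) // s.card = (X.image (List.cons false)).card} =
      (X.card + Y.card).choose X.card := by
    rw [Fintype.card_finset_len, Fintype.card_fin, hcu, hcx]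
  rw [this, card_cons, card_cons]
  ring

end DecLab

/-- Case 1: the single-vertex tree. -/
lemma card_NAT_leaf : Nat.card (NAT (node nil nil)) = 1 := by
  rw [Nat.card_congr (natEquiv _), Nat.card_prod]
  have h1 : (node nil nil).leftVertices = ∅ := by
    rw [LV_node]; simp [LV_nil]
  have h2 : (node nil nil).rightVertices = ∅ := by
    rw [RV_node]; simp [RV_nil]
  rw [h1, h2, DecLab.card_empty]

/-- Case 2: only a right subtree. -/
lemma card_NAT_right (r : BT) (hr : r ≠ nil) :
    Nat.card (NAT (node nil r)) = Nat.card (NAT r) := by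
  rw [Nat.card_congr (natEquiv _), Nat.card_prod,
    Nat.card_congr (natEquiv r), Nat.card_prod]
  have h1 : (node nil r).leftVertices = r.leftVertices.image (List.cons true) := by
    rw [LV_node]; simp [LV_nil]
  have h2 : (node nil r).rightVertices =
      (insert ([] : List Bool) r.rightVertices).image (List.cons true) := by
    rw [RV_node]
    simp only [RV_nil, Finset.image_empty, if_neg hr, Finset.image_insert,
      Finset.empty_union]
    rw [← Finset.insert_eq]
  rw [h1, h2, DecLab.card_cons, DecLab.card_cons,
    DecLab.card_insert_nil _ (fun h => ne_nil_of_mem_RV h rfl)]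

/-- Case 3: only a left subtree. -/
lemma card_NAT_left (l : BT) (hl : l ≠ nil) :
    Nat.card (NAT (node l nil)) = Nat.card (NAT l) := by
  rw [Nat.card_congr (natEquiv _), Nat.card_prod,
    Nat.card_congr (natEquiv l), Nat.card_prod]
  have h1 : (node l nil).leftVertices =
      (insert ([] : List Bool) l.leftVertices).image (List.cons false) := by
    rw [LV_node]
    simp only [LV_nil, Finset.image_empty, if_neg hl, Finset.image_insert,
      Finset.union_empty]
    rw [← Finset.insert_eq]
  have h2 : (node l nil).rightVertices = l.rightVertices.image (List.cons false) := by
    rw [RV_node]; simp [RV_nil]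
  rw [h1, h2, DecLab.card_cons, DecLab.card_cons,
    DecLab.card_insert_nil _ (fun h => ne_nil_of_mem_LV h rfl)]

/-- Case 4: two subtrees. -/
lemma card_NAT_node (l r : BT) (hl : l ≠ nil) (hr : r ≠ nil) :
    Nat.card (NAT (node l r)) =
      ((l.leftVertices.card + 1 + r.leftVertices.card).choose (l.leftVertices.card + 1))
      * ((l.rightVertices.card + (r.rightVertices.card + 1)).choose l.rightVertices.card)
      * (Nat.card (NAT l) * Nat.card (NAT r)) := by
  rw [Nat.card_congr (natEquiv _), Nat.card_prod,
    Nat.card_congr (natEquiv l), Nat.card_prod, Nat.card_congr (natEquiv r), Nat.card_prod]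
  have h1 : (node l r).leftVertices =
      ((insert ([] : List Bool) l.leftVertices).image (List.cons false))
        ∪ (r.leftVertices.image (List.cons true)) := by
    rw [LV_node]
    simp only [if_neg hl, Finset.image_insert]
    rw [← Finset.insert_eq]
  have h2 : (node l r).rightVertices =
      (l.rightVertices.image (List.cons false))
        ∪ ((insert ([] : List Bool) r.rightVertices).image (List.cons true)) := by
    rw [RV_node]
    simp only [if_neg hr, Finset.image_insert]
    rw [← Finset.insert_eq]
  rw [h1, h2, DecLab.card_union, DecLab.card_union,
    DecLab.card_insert_nil _ (fun h => ne_nil_of_mem_LV h rfl),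
    DecLab.card_insert_nil _ (fun h => ne_nil_of_mem_RV h rfl),
    Finset.card_insert_of_notMem (fun h => ne_nil_of_mem_LV h rfl),
    Finset.card_insert_of_notMem (fun h => ne_nil_of_mem_RV h rfl)]
  ring

/-- Vertex counts of a node. -/
lemma card_LV_node (l r : BT) : (node l r).leftVertices.card =
    (if l = nil then 0 else 1) + l.leftVertices.card + r.leftVertices.card := by
  rw [LV_node]
  have hcx : (l.leftVertices.image (List.cons false)).card = l.leftVertices.card :=
    Finset.card_image_of_injective _ (fun a b h => by injection h)
  have hcy : (r.leftVertices.image (List.cons true)).card = r.leftVertices.card :=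
    Finset.card_image_of_injective _ (fun a b h => by injection h)
  have hd : Disjoint ((if l = nil then ∅ else {[false]}) ∪
      l.leftVertices.image (List.cons false)) (r.leftVertices.image (List.cons true)) := by
    rw [Finset.disjoint_union_left]
    constructor
    · split
      · simp
      · rw [Finset.disjoint_left]
        intro p hp hq
        obtain ⟨q', _, h⟩ := Finset.mem_image.1 hq
        rw [Finset.mem_singleton] at hp
        subst hp
        exact absurd h (by simp)
    · exact DecLab.disj (by simp) _ _
  have hd2 : Disjoint (if l = nil then ∅ else ({[false]} : Finset (List Bool)))
      (l.leftVertices.image (List.cons false)) := by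
    split
    · simp
    · rw [Finset.disjoint_left]
      intro p hp hq
      rw [Finset.mem_singleton] at hp
      subst hp
      obtain ⟨q', hq', h⟩ := Finset.mem_image.1 hq
      have : q' = [] := by simpa using h
      exact ne_nil_of_mem_LV hq' this
  rw [Finset.card_union_of_disjoint hd, Finset.card_union_of_disjoint hd2, hcx, hcy]
  congr 1
  split <;> simp

lemma card_RV_node (l r : BT) : (node l r).rightVertices.card =
    l.rightVertices.card + ((if r = nil then 0 else 1) + r.rightVertices.card) := by
  rw [RV_node]
  have hcx : (l.rightVertices.image (List.cons false)).card = l.rightVertices.card :=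
    Finset.card_image_of_injective _ (fun a b h => by injection h)
  have hcy : (r.rightVertices.image (List.cons true)).card = r.rightVertices.card :=
    Finset.card_image_of_injective _ (fun a b h => by injection h)
  have hd2 : Disjoint (if r = nil then ∅ else ({[true]} : Finset (List Bool)))
      (r.rightVertices.image (List.cons true)) := by
    split
    · simp
    · rw [Finset.disjoint_left]
      intro p hp hq
      rw [Finset.mem_singleton] at hp
      subst hp
      obtain ⟨q', hq', h⟩ := Finset.mem_image.1 hq
      have : q' = [] := by simpa using h
      exact ne_nil_of_mem_RV hq' this
  have hd : Disjoint (l.rightVertices.image (List.cons false))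
      ((if r = nil then ∅ else {[true]}) ∪ r.rightVertices.image (List.cons true)) := by
    rw [Finset.disjoint_union_right]
    constructor
    · split
      · simp
      · rw [Finset.disjoint_left]
        intro p hp hq
        obtain ⟨q', _, h⟩ := Finset.mem_image.1 hp
        rw [Finset.mem_singleton] at hq
        subst hq
        exact absurd h (by simp)
    · exact DecLab.disj (by simp) _ _
  rw [Finset.card_union_of_disjoint hd, Finset.card_union_of_disjoint hd2, hcx, hcy]
  congr 1
  split <;> simp

end PartD


-- Part E1 : finiteness infrastructure
section PartE1
open BT

lemma BT.paths_toFinset_node (l r : BT) : (node l r).paths.toFinset =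
    insert [] ((l.paths.toFinset.image (List.cons false))
      ∪ (r.paths.toFinset.image (List.cons true))) := by
  ext p
  simp [paths]

private lemma filter_head_false (X Y : Finset (List Bool)) :
    (insert [] ((X.image (List.cons false)) ∪ (Y.image (List.cons true)))).filter
      (fun p => p.head? = some false) = X.image (List.cons false) := by
  ext p
  simp only [Finset.mem_filter, Finset.mem_insert, Finset.mem_union, Finset.mem_image]
  constructor
  · rintro ⟨rfl | (⟨q, hq, rfl⟩ | ⟨q, hq, rfl⟩), hh⟩
    · simp at hh
    · exact ⟨q, hq, rfl⟩
    · simp at hh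
  · rintro ⟨q, hq, rfl⟩
    exact ⟨Or.inr (Or.inl ⟨q, hq, rfl⟩), rfl⟩

private lemma filter_head_true (X Y : Finset (List Bool)) :
    (insert [] ((X.image (List.cons false)) ∪ (Y.image (List.cons true)))).filter
      (fun p => p.head? = some true) = Y.image (List.cons true) := by
  ext p
  simp only [Finset.mem_filter, Finset.mem_insert, Finset.mem_union, Finset.mem_image]
  constructor
  · rintro ⟨rfl | (⟨q, hq, rfl⟩ | ⟨q, hq, rfl⟩), hh⟩
    · simp at hh
    · simp at hh
    · exact ⟨q, hq, rfl⟩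
  · rintro ⟨q, hq, rfl⟩
    exact ⟨Or.inr (Or.inr ⟨q, hq, rfl⟩), rfl⟩

lemma BT.paths_toFinset_injective : ∀ B C : BT, B.paths.toFinset = C.paths.toFinset → B = C := by
  intro B
  induction B with
  | nil =>
    intro C h
    cases C with
    | nil => rfl
    | node l r =>
      exfalso
      have : ([] : List Bool) ∈ (node l r).paths.toFinset := by
        simp [paths]
      rw [← h] at this
      simp [paths] at this
  | node l r ihl ihr =>
    intro C h
    cases C with
    | nil =>
      exfalso
      have : ([] : List Bool) ∈ (node l r).paths.toFinset := by
        simp [paths]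
      rw [h] at this
      simp [paths] at this
    | node l' r' =>
      rw [BT.paths_toFinset_node, BT.paths_toFinset_node] at h
      have hf := congrArg (Finset.filter (fun p => p.head? = some false)) h
      rw [filter_head_false, filter_head_false] at hf
      have ht := congrArg (Finset.filter (fun p => p.head? = some true)) h
      rw [filter_head_true, filter_head_true] at ht
      have hinj : Function.Injective (List.cons false : List Bool → List Bool) :=
        fun x y hxy => by injection hxy
      have hinj' : Function.Injective (List.cons true : List Bool → List Bool) :=
        fun x y hxy => by injection hxy
      have h1 : l.paths.toFinset = l'.paths.toFinset := Finset.image_injective hinj hf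
      have h2 : r.paths.toFinset = r'.paths.toFinset := Finset.image_injective hinj' ht
      rw [ihl _ h1, ihr _ h2]

lemma BT.ne_nil_of_mem_paths {B : BT} {q : List Bool} (h : q ∈ B.paths) : B ≠ nil := by
  cases B
  · simp [paths] at h
  · simp

lemma BT.length_le_of_mem_paths : ∀ (B : BT) (p : List Bool), p ∈ B.paths →
    p.length ≤ B.leftVertices.card + B.rightVertices.card := by
  intro B
  induction B with
  | nil => intro p hp; simp [paths] at hp
  | node l r ihl ihr =>
    intro p hp
    have hLV := card_LV_node l r
    have hRV := card_RV_node l r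
    simp only [paths, List.mem_cons, List.mem_append, List.mem_map] at hp
    rcases hp with rfl | ⟨q, hq, rfl⟩ | ⟨q, hq, rfl⟩
    · simp
    · have h1 := ihl q hq
      have h2 : l ≠ nil := BT.ne_nil_of_mem_paths hq
      rw [if_neg h2] at hLV
      simp only [List.length_cons]
      omega
    · have h1 := ihr q hq
      have h2 : r ≠ nil := BT.ne_nil_of_mem_paths hq
      rw [if_neg h2] at hRV
      simp only [List.length_cons]
      omega

/-- Bounded-length lists of booleans. -/
def boundedLists : ℕ → Finset (List Bool)
  | 0 => {[]}
  | n+1 => insert [] ((boundedLists n).image (List.cons false)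
      ∪ (boundedLists n).image (List.cons true))

lemma mem_boundedLists : ∀ (n : ℕ) (p : List Bool), p.length ≤ n → p ∈ boundedLists n := by
  intro n
  induction n with
  | zero =>
    intro p hp
    have : p = [] := List.eq_nil_of_length_eq_zero (Nat.le_zero.1 hp)
    simp [boundedLists, this]
  | succ n ih =>
    intro p hp
    cases p with
    | nil => simp [boundedLists]
    | cons x q =>
      have : q.length ≤ n := by simpa using hp
      have hq := ih q this
      cases x
      · simp only [boundedLists, Finset.mem_insert, Finset.mem_union, Finset.mem_image]
        exact Or.inr (Or.inl ⟨q, hq, rfl⟩)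
      · simp only [boundedLists, Finset.mem_insert, Finset.mem_union, Finset.mem_image]
        exact Or.inr (Or.inr ⟨q, hq, rfl⟩)

/-- Finiteness of sets of shapes with prescribed vertex counts. -/
lemma shapes_finite {a b : ℕ} {P : BT → Prop}
    (hP : ∀ B, P B → B.leftVertices.card = a ∧ B.rightVertices.card = b) :
    Finite {B : BT // P B} := by
  refine Finite.of_injective (fun B =>
    (⟨B.1.paths.toFinset, ?_⟩ : {S // S ∈ (boundedLists (a+b)).powerset})) ?_
  · rw [Finset.mem_powerset]
    intro p hp
    rw [List.mem_toFinset] at hp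
    have := BT.length_le_of_mem_paths B.1 p hp
    rw [(hP B.1 B.2).1, (hP B.1 B.2).2] at this
    exact mem_boundedLists _ _ this
  · intro B C h
    have := congrArg Subtype.val h
    simp only at this
    exact Subtype.ext (BT.paths_toFinset_injective _ _ this)

end PartE1


-- Part E2 : counting infrastructure
section PartE2
open BT

def bl : BT → BT | BT.nil => BT.nil | BT.node l _ => l
def br : BT → BT | BT.nil => BT.nil | BT.node _ r => r

lemma BT.eta_node : ∀ B : BT, B ≠ nil → B = node (bl B) (br B) := by
  intro B h
  cases B with
  | nil => exact absurd rfl h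
  | node l r => rfl

def sigmaEquiv (P : BT → Prop) : {T : Σ B : BT, NAT B // P T.1} ≃ Σ B : {B : BT // P B}, NAT B.1 where
  toFun T := ⟨⟨T.1.1, T.2⟩, T.1.2⟩
  invFun x := ⟨⟨x.1.1, x.2⟩, x.1.2⟩
  left_inv T := rfl
  right_inv x := rfl

lemma Tsub_finite {P : BT → Prop} (h : Finite {B : BT // P B}) :
    Finite {T : Σ B : BT, NAT B // P T.1} := by
  haveI := h
  exact Finite.of_equiv _ (sigmaEquiv P).symm

lemma card_eq_sum (P : BT → Prop) (inst : Fintype {B : BT // P B}) :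
    Nat.card {T : Σ B : BT, NAT B // P T.1} = ∑ B : {B : BT // P B}, Nat.card (NAT B.1) := by
  rw [Nat.card_congr (sigmaEquiv P)]
  letI : ∀ B : {B : BT // P B}, Fintype (NAT B.1) := fun B => Fintype.ofFinite _
  rw [Nat.card_eq_fintype_card, Fintype.card_sigma]
  exact Finset.sum_congr rfl (fun B _ => (Nat.card_eq_fintype_card).symm)

lemma card_split {α : Type*} (P Q : α → Prop) (hfin : Finite {x : α // P x}) :
    Nat.card {x // P x} = Nat.card {x // P x ∧ Q x} + Nat.card {x // P x ∧ ¬ Q x} := by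
  classical
  haveI := hfin
  haveI : Finite {x // P x ∧ Q x} := Finite.of_injective
    (fun y => (⟨y.1, y.2.1⟩ : {x // P x}))
    (fun u v h => Subtype.ext (by simpa using h))
  haveI : Finite {x // P x ∧ ¬ Q x} := Finite.of_injective
    (fun y => (⟨y.1, y.2.1⟩ : {x // P x}))
    (fun u v h => Subtype.ext (by simpa using h))
  rw [← Nat.card_sum]
  apply Nat.card_congr
  exact ((Equiv.sumCongr
      (Equiv.subtypeSubtypeEquivSubtypeInter P Q).symm
      (Equiv.subtypeSubtypeEquivSubtypeInter P (fun x => ¬ Q x)).symm).trans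
    (Equiv.sumCompl (fun y : {x // P x} => Q y.1))).symm

lemma card_LV_nil : BT.nil.leftVertices.card = 0 := rfl
lemma card_RV_nil : BT.nil.rightVertices.card = 0 := rfl

end PartE2


-- Part E3 : the recursion for natCount
section PartE3
open BT


lemma card_LV_leaf : (BT.node nil nil).leftVertices.card = 0 := by
  rw [card_LV_node]
  simp [LV_nil]

lemma card_RV_leaf : (BT.node nil nil).rightVertices.card = 0 := by
  rw [card_RV_node]
  simp [RV_nil]

theorem natCount_rec (a b : ℕ) :
    natCount a b = (if a = 0 ∧ b = 0 then 1 else 0)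
      + (if b = 0 then 0 else natCount a (b-1))
      + (if a = 0 then 0 else natCount (a-1) b)
      + ∑ i ∈ Finset.range (a+1), ∑ j ∈ Finset.range (b+1),
          (if j = 0 ∨ i = a then 0
           else a.choose i * b.choose j * natCount i (j-1) * natCount (a-i-1) (b-j)) := by
  classical
  set P0 : BT → Prop :=
    fun B => B ≠ nil ∧ B.leftVertices.card = a ∧ B.rightVertices.card = b with hP0
  have hfin0 : Finite {B : BT // P0 B} := shapes_finite (fun B h => ⟨h.2.1, h.2.2⟩)
  have finR : ∀ Q : BT → Prop, (∀ B, Q B → P0 B) → Finite {B : BT // Q B} := by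
    intro Q hQ
    haveI := hfin0
    exact Finite.of_injective (fun y => (⟨y.1, hQ _ y.2⟩ : {B : BT // P0 B}))
      (fun u v h => Subtype.ext (by simpa using h))
  have hfinQ : ∀ Q : BT → Prop, Finite {B : BT // P0 B ∧ Q B} :=
    fun Q => finR _ (fun B h => h.1)
  have hstart : natCount a b = Nat.card {T : Σ B : BT, NAT B // P0 T.1} := rfl
  rw [hstart]
  rw [card_split (fun T : Σ B : BT, NAT B => P0 T.1) (fun T => bl T.1 = nil)
    (Tsub_finite hfin0)]
  have e1 : Nat.card {T : Σ B : BT, NAT B // P0 T.1 ∧ bl T.1 = nil}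
      = Nat.card {T : Σ B : BT, NAT B // (P0 T.1 ∧ bl T.1 = nil) ∧ br T.1 = nil}
      + Nat.card {T : Σ B : BT, NAT B // (P0 T.1 ∧ bl T.1 = nil) ∧ ¬ br T.1 = nil} :=
    card_split (fun T : Σ B : BT, NAT B => P0 T.1 ∧ bl T.1 = nil) (fun T => br T.1 = nil)
      (Tsub_finite (P := fun B => P0 B ∧ bl B = nil) (hfinQ _))
  have e2 : Nat.card {T : Σ B : BT, NAT B // P0 T.1 ∧ ¬ bl T.1 = nil}
      = Nat.card {T : Σ B : BT, NAT B // (P0 T.1 ∧ ¬ bl T.1 = nil) ∧ br T.1 = nil}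
      + Nat.card {T : Σ B : BT, NAT B // (P0 T.1 ∧ ¬ bl T.1 = nil) ∧ ¬ br T.1 = nil} :=
    card_split (fun T : Σ B : BT, NAT B => P0 T.1 ∧ ¬ bl T.1 = nil) (fun T => br T.1 = nil)
      (Tsub_finite (P := fun B => P0 B ∧ ¬ bl B = nil) (hfinQ _))
  rw [e1, e2]
  -- Case 1 : both subtrees empty
  have h1 : Nat.card {T : Σ B : BT, NAT B // (P0 T.1 ∧ bl T.1 = nil) ∧ br T.1 = nil}
      = (if a = 0 ∧ b = 0 then 1 else 0) := by
    set R : BT → Prop := fun B => (P0 B ∧ bl B = nil) ∧ br B = nil with hRdef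
    have hfinR : Finite {B : BT // R B} := finR _ (fun B h => h.1.1)
    haveI := hfinR
    letI instR : Fintype {B : BT // R B} := Fintype.ofFinite _
    refine (card_eq_sum R instR).trans ?_
    by_cases hab : a = 0 ∧ b = 0
    · rw [if_pos hab]
      have hmem : R (node nil nil) := by
        refine ⟨⟨⟨by simp, ?_, ?_⟩, rfl⟩, rfl⟩
        · rw [card_LV_leaf, hab.1]
        · rw [card_RV_leaf, hab.2]
      have huniv : (Finset.univ : Finset {B : BT // R B}) = {⟨node nil nil, hmem⟩} := by
        rw [Finset.eq_singleton_iff_unique_mem]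
        refine ⟨Finset.mem_univ _, fun y _ => Subtype.ext ?_⟩
        have h := BT.eta_node y.1 y.2.1.1.1
        rw [y.2.1.2, y.2.2] at h
        exact h
      rw [huniv, Finset.sum_singleton, card_NAT_leaf]
    · rw [if_neg hab]
      haveI : IsEmpty {B : BT // R B} := ⟨fun y => by
        have h := BT.eta_node y.1 y.2.1.1.1
        rw [y.2.1.2, y.2.2] at h
        have h1 := y.2.1.1.2.1
        have h2 := y.2.1.1.2.2
        rw [h, card_LV_leaf] at h1
        rw [h, card_RV_leaf] at h2
        exact hab ⟨h1.symm, h2.symm⟩⟩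
      rw [Finset.univ_eq_empty, Finset.sum_empty]
  -- Case 2 : only a right subtree
  have h2 : Nat.card {T : Σ B : BT, NAT B // (P0 T.1 ∧ bl T.1 = nil) ∧ ¬ br T.1 = nil}
      = (if b = 0 then 0 else natCount a (b-1)) := by
    set R : BT → Prop := fun B => (P0 B ∧ bl B = nil) ∧ ¬ br B = nil with hRdef
    have hfinR : Finite {B : BT // R B} := finR _ (fun B h => h.1.1)
    haveI := hfinR
    letI instR : Fintype {B : BT // R B} := Fintype.ofFinite _
    refine (card_eq_sum R instR).trans ?_
    have heta : ∀ y : {B : BT // R B}, y.1 = node nil (br y.1) := by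
      intro y
      have h := BT.eta_node y.1 y.2.1.1.1
      rwa [y.2.1.2] at h
    have hLV : ∀ y : {B : BT // R B}, (br y.1).leftVertices.card = a := by
      intro y
      have hl := y.2.1.1.2.1
      rw [heta y, card_LV_node] at hl
      simpa [LV_nil] using hl
    have hRV : ∀ y : {B : BT // R B}, (br y.1).rightVertices.card + 1 = b := by
      intro y
      have hr := y.2.1.1.2.2
      rw [heta y, card_RV_node, if_neg y.2.2] at hr
      simp only [RV_nil, Finset.card_empty] at hr
      omega
    by_cases hb : b = 0
    · rw [if_pos hb]
      haveI : IsEmpty {B : BT // R B} := ⟨fun y => by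
        have := hRV y
        omega⟩
      rw [Finset.univ_eq_empty, Finset.sum_empty]
    · rw [if_neg hb]
      set P' : BT → Prop :=
        fun B => B ≠ nil ∧ B.leftVertices.card = a ∧ B.rightVertices.card = b - 1 with hP'
      have hfinP' : Finite {B : BT // P' B} := shapes_finite (fun B h => ⟨h.2.1, h.2.2⟩)
      haveI := hfinP'
      letI instP' : Fintype {B : BT // P' B} := Fintype.ofFinite _
      have hl2 : natCount a (b-1)
          = ∑ C : {B : BT // P' B}, Nat.card (NAT C.1) := card_eq_sum P' instP'
      rw [hl2]
      refine Finset.sum_nbij' (i := fun y => (⟨br y.1, ?_, ?_, ?_⟩ : {B : BT // P' B}))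
        (j := fun C => (⟨node nil C.1, ?_⟩ : {B : BT // R B}))
        (fun _ _ => Finset.mem_univ _) (fun _ _ => Finset.mem_univ _) ?_ ?_ ?_
      · exact y.2.2
      · exact hLV y
      · have := hRV y; omega
      · refine ⟨⟨⟨by simp, ?_, ?_⟩, rfl⟩, ?_⟩
        · rw [card_LV_node]
          simpa [LV_nil] using C.2.2.1
        · rw [card_RV_node, if_neg C.2.1]
          simp only [RV_nil, Finset.card_empty]
          have := C.2.2.2
          omega
        · exact C.2.1
      · intro y _
        exact Subtype.ext (heta y).symm
      · intro C _
        exact Subtype.ext rfl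
      · intro y _
        have hcard := congrArg (fun t => Nat.card (NAT t)) (heta y)
        rw [hcard, card_NAT_right _ y.2.2]
  -- Case 3 : only a left subtree
  have h3 : Nat.card {T : Σ B : BT, NAT B // (P0 T.1 ∧ ¬ bl T.1 = nil) ∧ br T.1 = nil}
      = (if a = 0 then 0 else natCount (a-1) b) := by
    set R : BT → Prop := fun B => (P0 B ∧ ¬ bl B = nil) ∧ br B = nil with hRdef
    have hfinR : Finite {B : BT // R B} := finR _ (fun B h => h.1.1)
    haveI := hfinR
    letI instR : Fintype {B : BT // R B} := Fintype.ofFinite _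
    refine (card_eq_sum R instR).trans ?_
    have heta : ∀ y : {B : BT // R B}, y.1 = node (bl y.1) nil := by
      intro y
      have h := BT.eta_node y.1 y.2.1.1.1
      rwa [y.2.2] at h
    have hLV : ∀ y : {B : BT // R B}, (bl y.1).leftVertices.card + 1 = a := by
      intro y
      have hl := y.2.1.1.2.1
      rw [heta y, card_LV_node, if_neg y.2.1.2] at hl
      simp only [LV_nil, Finset.card_empty] at hl
      omega
    have hRV : ∀ y : {B : BT // R B}, (bl y.1).rightVertices.card = b := by
      intro y
      have hr := y.2.1.1.2.2
      rw [heta y, card_RV_node] at hr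
      simpa [RV_nil] using hr
    by_cases ha : a = 0
    · rw [if_pos ha]
      haveI : IsEmpty {B : BT // R B} := ⟨fun y => by
        have := hLV y
        omega⟩
      rw [Finset.univ_eq_empty, Finset.sum_empty]
    · rw [if_neg ha]
      set P' : BT → Prop :=
        fun B => B ≠ nil ∧ B.leftVertices.card = a - 1 ∧ B.rightVertices.card = b with hP'
      have hfinP' : Finite {B : BT // P' B} := shapes_finite (fun B h => ⟨h.2.1, h.2.2⟩)
      haveI := hfinP'
      letI instP' : Fintype {B : BT // P' B} := Fintype.ofFinite _
      have hl2 : natCount (a-1) b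
          = ∑ C : {B : BT // P' B}, Nat.card (NAT C.1) := card_eq_sum P' instP'
      rw [hl2]
      refine Finset.sum_nbij' (i := fun y => (⟨bl y.1, ?_, ?_, ?_⟩ : {B : BT // P' B}))
        (j := fun C => (⟨node C.1 nil, ?_⟩ : {B : BT // R B}))
        (fun _ _ => Finset.mem_univ _) (fun _ _ => Finset.mem_univ _) ?_ ?_ ?_
      · exact y.2.1.2
      · have := hLV y; omega
      · exact hRV y
      · refine ⟨⟨⟨by simp, ?_, ?_⟩, ?_⟩, rfl⟩
        · rw [card_LV_node, if_neg C.2.1]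
          simp only [LV_nil, Finset.card_empty]
          have := C.2.2.1
          omega
        · rw [card_RV_node]
          simpa [RV_nil] using C.2.2.2
        · exact C.2.1
      · intro y _
        exact Subtype.ext (heta y).symm
      · intro C _
        exact Subtype.ext rfl
      · intro y _
        have hcard := congrArg (fun t => Nat.card (NAT t)) (heta y)
        rw [hcard, card_NAT_left _ y.2.1.2]
  have h4 : Nat.card {T : Σ B : BT, NAT B // (P0 T.1 ∧ ¬ bl T.1 = nil) ∧ ¬ br T.1 = nil}
      = ∑ i ∈ Finset.range (a+1), ∑ j ∈ Finset.range (b+1),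
          (if j = 0 ∨ i = a then 0
           else a.choose i * b.choose j * natCount i (j-1) * natCount (a-i-1) (b-j)) := by
    set R : BT → Prop := fun B => (P0 B ∧ ¬ bl B = nil) ∧ ¬ br B = nil with hRdef
    have hfinR : Finite {B : BT // R B} := finR _ (fun B h => h.1.1)
    haveI := hfinR
    letI instR : Fintype {B : BT // R B} := Fintype.ofFinite _
    refine (card_eq_sum R instR).trans ?_
    have heta : ∀ y : {B : BT // R B}, y.1 = node (bl y.1) (br y.1) :=
      fun y => BT.eta_node y.1 y.2.1.1.1
    have hLV : ∀ y : {B : BT // R B},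
        1 + (bl y.1).leftVertices.card + (br y.1).leftVertices.card = a := by
      intro y
      have hl := y.2.1.1.2.1
      rw [heta y, card_LV_node, if_neg y.2.1.2] at hl
      exact hl
    have hRV : ∀ y : {B : BT // R B},
        (bl y.1).rightVertices.card + (1 + (br y.1).rightVertices.card) = b := by
      intro y
      have hr := y.2.1.1.2.2
      rw [heta y, card_RV_node, if_neg y.2.2] at hr
      exact hr
    have hmaps : ∀ y ∈ (Finset.univ : Finset {B : BT // R B}),
        ((br y.1).leftVertices.card, (br y.1).rightVertices.card + 1)
          ∈ Finset.range (a+1) ×ˢ Finset.range (b+1) := by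
      intro y _
      rw [Finset.mem_product, Finset.mem_range, Finset.mem_range]
      have := hLV y
      have := hRV y
      omega
    rw [← Finset.sum_fiberwise_of_maps_to hmaps (fun y => Nat.card (NAT y.1)),
      Finset.sum_product]
    refine Finset.sum_congr rfl (fun i hi => Finset.sum_congr rfl (fun j hj => ?_))
    rw [Finset.mem_range] at hi hj
    by_cases hij : j = 0 ∨ i = a
    · rw [if_pos hij]
      have : Finset.filter (fun y : {B : BT // R B} =>
          ((br y.1).leftVertices.card, (br y.1).rightVertices.card + 1) = (i, j))
          Finset.univ = ∅ := by
        refine Finset.eq_empty_of_forall_notMem (fun y hy => ?_)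
        rw [Finset.mem_filter] at hy
        have hki : (br y.1).leftVertices.card = i := congrArg Prod.fst hy.2
        have hkj : (br y.1).rightVertices.card + 1 = j := congrArg Prod.snd hy.2
        have := hLV y
        omega
      rw [this, Finset.sum_empty]
    · rw [if_neg hij]
      push_neg at hij
      obtain ⟨hj0, hia⟩ := hij
      -- pointwise rewrite of the summand
      have hpoint : ∀ y ∈ Finset.filter (fun y : {B : BT // R B} =>
          ((br y.1).leftVertices.card, (br y.1).rightVertices.card + 1) = (i, j))
          Finset.univ, Nat.card (NAT y.1)
            = (a.choose i * b.choose j)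
              * (Nat.card (NAT (bl y.1)) * Nat.card (NAT (br y.1))) := by
        intro y hy
        rw [Finset.mem_filter] at hy
        have hki : (br y.1).leftVertices.card = i := congrArg Prod.fst hy.2
        have hkj : (br y.1).rightVertices.card + 1 = j := congrArg Prod.snd hy.2
        have hL := hLV y
        have hR := hRV y
        have hcard := congrArg (fun t => Nat.card (NAT t)) (heta y)
        rw [hcard, card_NAT_node _ _ y.2.1.2 y.2.2]
        have e1 : (bl y.1).leftVertices.card + 1 + (br y.1).leftVertices.card = a := by omega
        have e2 : (bl y.1).rightVertices.card + ((br y.1).rightVertices.card + 1) = b := by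
          omega
        rw [e1, e2]
        have e3 : (bl y.1).leftVertices.card + 1 = a - i := by omega
        have e4 : (bl y.1).rightVertices.card = b - j := by omega
        rw [e3, e4, Nat.choose_symm (by omega : i ≤ a), Nat.choose_symm (by omega : j ≤ b)]
      rw [Finset.sum_congr rfl hpoint, ← Finset.mul_sum]
      -- now compute the remaining sum as a product of two counts
      set PL : BT → Prop :=
        fun B => B ≠ nil ∧ B.leftVertices.card = a-i-1 ∧ B.rightVertices.card = b-j with hPL
      set PR : BT → Prop :=
        fun B => B ≠ nil ∧ B.leftVertices.card = i ∧ B.rightVertices.card = j-1 with hPR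
      have hfinPL : Finite {B : BT // PL B} := shapes_finite (fun B h => ⟨h.2.1, h.2.2⟩)
      have hfinPR : Finite {B : BT // PR B} := shapes_finite (fun B h => ⟨h.2.1, h.2.2⟩)
      haveI := hfinPL; haveI := hfinPR
      letI instPL : Fintype {B : BT // PL B} := Fintype.ofFinite _
      letI instPR : Fintype {B : BT // PR B} := Fintype.ofFinite _
      have hsum : ∑ y ∈ Finset.filter (fun y : {B : BT // R B} =>
          ((br y.1).leftVertices.card, (br y.1).rightVertices.card + 1) = (i, j))
          Finset.univ, (Nat.card (NAT (bl y.1)) * Nat.card (NAT (br y.1)))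
          = ∑ p : {B : BT // PL B} × {B : BT // PR B},
              Nat.card (NAT p.1.1) * Nat.card (NAT p.2.1) := by
        refine Finset.sum_bij' (i := fun y hy => (⟨bl y.1, ?_, ?_, ?_⟩, ⟨br y.1, ?_, ?_, ?_⟩))
          (j := fun p _ => ⟨node p.1.1 p.2.1, ?_⟩) ?_ ?_ ?_ ?_ ?_
        · exact y.2.1.2
        · have hki : (br y.1).leftVertices.card = i :=
            congrArg Prod.fst (Finset.mem_filter.1 hy).2
          have := hLV y
          omega
        · have hkj : (br y.1).rightVertices.card + 1 = j :=
            congrArg Prod.snd (Finset.mem_filter.1 hy).2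
          have := hRV y
          omega
        · exact y.2.2
        · exact congrArg Prod.fst (Finset.mem_filter.1 hy).2
        · have hkj : (br y.1).rightVertices.card + 1 = j :=
            congrArg Prod.snd (Finset.mem_filter.1 hy).2
          omega
        · refine ⟨⟨⟨by simp, ?_, ?_⟩, ?_⟩, ?_⟩
          · rw [card_LV_node, if_neg p.1.2.1, p.1.2.2.1, p.2.2.2.1]
            omega
          · rw [card_RV_node, if_neg p.2.2.1, p.1.2.2.2, p.2.2.2.2]
            omega
          · exact p.1.2.1
          · exact p.2.2.1
        · intro y hy
          exact Finset.mem_univ _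
        · intro p _
          rw [Finset.mem_filter]
          refine ⟨Finset.mem_univ _, ?_⟩
          have : br (node p.1.1 p.2.1) = p.2.1 := rfl
          rw [this, p.2.2.2.1, p.2.2.2.2]
          have : j - 1 + 1 = j := by omega
          rw [this]
        · intro y hy
          exact Subtype.ext (heta y).symm
        · intro p _
          exact Prod.ext (Subtype.ext rfl) (Subtype.ext rfl)
        · intro y hy
          rfl
      rw [hsum, Fintype.sum_prod_type]
      have : natCount i (j-1) = ∑ D : {B : BT // PR B}, Nat.card (NAT D.1) :=
        card_eq_sum PR instPR
      rw [this]
      have : natCount (a-i-1) (b-j) = ∑ C : {B : BT // PL B}, Nat.card (NAT C.1) :=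
        card_eq_sum PL instPL
      rw [this]
      have hfin2 : (∑ x : {B : BT // PL B}, ∑ y : {B : BT // PR B},
            Nat.card (NAT x.1) * Nat.card (NAT y.1))
          = (∑ x : {B : BT // PL B}, Nat.card (NAT x.1))
            * (∑ y : {B : BT // PR B}, Nat.card (NAT y.1)) :=
        (Finset.sum_mul_sum _ _ _ _).symm
      rw [hfin2]
      ring
  rw [h1, h2, h3, h4]
  ring

end PartE3


-- Part F : the power series computation
section PartF

noncomputable def sX : Fin 2 →₀ ℕ := Finsupp.single 0 1
noncomputable def sY : Fin 2 →₀ ℕ := Finsupp.single 1 1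

lemma natGF_apply (g : Fin 2 →₀ ℕ) :
    natGF g = (natCount (g 0) (g 1) : ℚ) / ((g 0).factorial * (g 1).factorial) := rfl

lemma dX_apply (F : MvPowerSeries (Fin 2) ℚ) (g : Fin 2 →₀ ℕ) :
    dX F g = ((g 0 : ℚ) + 1) * F (g + sX) := rfl

lemma dY_apply (F : MvPowerSeries (Fin 2) ℚ) (g : Fin 2 →₀ ℕ) :
    dY F g = ((g 1 : ℚ) + 1) * F (g + sY) := rfl

lemma intX_apply (F : MvPowerSeries (Fin 2) ℚ) (g : Fin 2 →₀ ℕ) :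
    intX F g = if g 0 = 0 then 0 else F (g - sX) / (g 0 : ℚ) := rfl

lemma intY_apply (F : MvPowerSeries (Fin 2) ℚ) (g : Fin 2 →₀ ℕ) :
    intY F g = if g 1 = 0 then 0 else F (g - sY) / (g 1 : ℚ) := rfl

lemma fin2_eta (g : Fin 2 →₀ ℕ) : g = Finsupp.single 0 (g 0) + Finsupp.single 1 (g 1) := by
  ext x
  fin_cases x <;> simp [Finsupp.single_apply]

lemma s0_apply_1 : (sX) 1 = 0 := by
  simp [sX, Finsupp.single_apply]

lemma s1_apply_0 : (sY) 0 = 0 := by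
  simp [sY, Finsupp.single_apply]

lemma s0_apply_0 : (sX) 0 = 1 := by
  simp [sX]

lemma s1_apply_1 : (sY) 1 = 1 := by
  simp [sY]

lemma natL_apply (f : Fin 2 →₀ ℕ) : natL f =
    (if f = sX then 1 else 0) + (if f = sY then 1 else 0)
      + intX (intY natGF) f := by
  show (MvPowerSeries.X (0 : Fin 2) : MvPowerSeries (Fin 2) ℚ) f
      + (MvPowerSeries.X (1 : Fin 2) : MvPowerSeries (Fin 2) ℚ) f + intX (intY natGF) f = _
  have hx0 : (MvPowerSeries.X (0 : Fin 2) : MvPowerSeries (Fin 2) ℚ) f =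
      (if f = sX then 1 else 0) := MvPowerSeries.coeff_X f 0
  have hx1 : (MvPowerSeries.X (1 : Fin 2) : MvPowerSeries (Fin 2) ℚ) f =
      (if f = sY then 1 else 0) := MvPowerSeries.coeff_X f 1
  rw [hx0, hx1]

/-- `∂ₓ∂_y L` is `N` itself. -/
lemma dXdY_natL (e : Fin 2 →₀ ℕ) : dX (dY natL) e = natGF e := by
  rw [dX_apply, dY_apply]
  have h1 : (e + sX) 1 = e 1 := by
    simp [sX, sY, Finsupp.add_apply, Finsupp.tsub_apply, Finsupp.single_apply]
  set f := e + sX + sY with hf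
  have hf0 : f 0 = e 0 + 1 := by
    simp [hf, Finsupp.add_apply, s1_apply_0, s0_apply_0]
  have hf1 : f 1 = e 1 + 1 := by
    simp [hf, Finsupp.add_apply, s0_apply_1, s1_apply_1]
  rw [natL_apply]
  have hne0 : f ≠ sX := by
    intro h
    have := congrArg (fun g : Fin 2 →₀ ℕ => g 1) h
    simp only [hf1, s0_apply_1] at this
    omega
  have hne1 : f ≠ sY := by
    intro h
    have := congrArg (fun g : Fin 2 →₀ ℕ => g 0) h
    simp only [hf0, s1_apply_0] at this
    omega
  rw [if_neg hne0, if_neg hne1]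
  have hintX : intX (intY natGF) f = intY natGF (f - sX) / ((e 0 : ℚ) + 1) := by
    rw [intX_apply, if_neg (by omega : ¬ f 0 = 0), hf0]
    push_cast
    ring_nf
  have hsub : f - sX = e + sY := by
    rw [hf, add_right_comm]
    exact add_tsub_cancel_right _ _
  have hintY : intY natGF (e + sY) = natGF e / ((e 1 : ℚ) + 1) := by
    have h2 : (e + sY) 1 = e 1 + 1 := by
      simp [sX, sY, Finsupp.add_apply, Finsupp.single_apply]
    rw [intY_apply, if_neg (by omega : ¬ (e + sY) 1 = 0),
      add_tsub_cancel_right, h2]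
    push_cast
    ring_nf
  rw [hintX, hsub, hintY, h1, natGF_apply]
  have ha : ((e 0 : ℚ) + 1) ≠ 0 := by positivity
  have hb : ((e 1 : ℚ) + 1) ≠ 0 := by positivity
  field_simp
  ring

/-- Coefficients of `∂ₓ L`. -/
lemma dX_natL (g : Fin 2 →₀ ℕ) : dX natL g =
    (if g = 0 then 1 else 0)
      + (if g 1 = 0 then 0
          else (natCount (g 0) (g 1 - 1) : ℚ) / ((g 0).factorial * (g 1).factorial)) := by
  rw [dX_apply, natL_apply]
  have h0 : (g + sX) 0 = g 0 + 1 := by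
    simp [sX, sY, Finsupp.add_apply, Finsupp.single_apply]
  have h1 : (g + sX) 1 = g 1 := by
    simp [sX, sY, Finsupp.add_apply, Finsupp.tsub_apply, Finsupp.single_apply]
  have hif0 : (g + sX = sX) ↔ g = 0 := by
    constructor
    · intro h
      have : g + sX = 0 + sX := by rw [h, zero_add]
      exact add_right_cancel this
    · intro h; rw [h, zero_add]
  have hif1 : ¬ (g + sX = sY) := by
    intro h
    have := congrArg (fun v : Fin 2 →₀ ℕ => v 0) h
    simp only [h0, s1_apply_0] at this
    omega
  rw [if_neg hif1, if_congr hif0 rfl rfl]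
  have hintX : intX (intY natGF) (g + sX)
      = intY natGF g / ((g 0 : ℚ) + 1) := by
    rw [intX_apply, if_neg (by omega : ¬ (g + sX) 0 = 0),
      add_tsub_cancel_right, h0]
    push_cast
    ring_nf
  rw [hintX]
  have ha : ((g 0 : ℚ) + 1) ≠ 0 := by positivity
  by_cases hg1 : g 1 = 0
  · have hintY : intY natGF g = 0 := by
      show (if g 1 = 0 then 0 else _) = 0
      rw [if_pos hg1]
    rw [hintY, if_pos hg1]
    by_cases hg : g = 0
    · rw [if_pos hg]
      have : g 0 = 0 := by rw [hg]; rfl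
      rw [this]
      norm_num
    · rw [if_neg hg]
      field_simp
      ring
  · have hgne : ¬ g = 0 := by
      intro h
      apply hg1
      rw [h]
      rfl
    rw [if_neg hg1, if_neg hgne]
    have hintY : intY natGF g
        = (natCount (g 0) (g 1 - 1) : ℚ)
            / ((g 0).factorial * (g 1 - 1).factorial) / (g 1 : ℚ) := by
      have e0 : (g - sY) 0 = g 0 := by
        simp [sX, sY, Finsupp.add_apply, Finsupp.tsub_apply, Finsupp.single_apply]
      have e1 : (g - sY) 1 = g 1 - 1 := by
        simp [sX, sY, Finsupp.tsub_apply, Finsupp.single_apply]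
      rw [intY_apply, if_neg hg1, natGF_apply, e0, e1]
    rw [hintY]
    have hfact : ((g 1).factorial : ℚ) = (g 1 : ℚ) * ((g 1 - 1).factorial : ℚ) := by
      rw [← Nat.mul_factorial_pred (by omega : g 1 ≠ 0)]
      push_cast
      ring
    rw [hfact]
    have h2 : ((g 0).factorial : ℚ) ≠ 0 := by positivity
    have h3 : ((g 1 - 1).factorial : ℚ) ≠ 0 := by positivity
    have h4 : (g 1 : ℚ) ≠ 0 := by
      simpa using hg1
    field_simp
    ring

/-- Coefficients of `∂_y L`. -/
lemma dY_natL (g : Fin 2 →₀ ℕ) : dY natL g =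
    (if g = 0 then 1 else 0)
      + (if g 0 = 0 then 0
          else (natCount (g 0 - 1) (g 1) : ℚ) / ((g 0).factorial * (g 1).factorial)) := by
  rw [dY_apply, natL_apply]
  have h0 : (g + sY) 0 = g 0 := by
    simp [sX, sY, Finsupp.add_apply, Finsupp.tsub_apply, Finsupp.single_apply]
  have h1 : (g + sY) 1 = g 1 + 1 := by
    simp [sX, sY, Finsupp.add_apply, Finsupp.single_apply]
  have hif1 : (g + sY = sY) ↔ g = 0 := by
    constructor
    · intro h
      have : g + sY = 0 + sY := by rw [h, zero_add]
      exact add_right_cancel this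
    · intro h; rw [h, zero_add]
  have hif0 : ¬ (g + sY = sX) := by
    intro h
    have := congrArg (fun v : Fin 2 →₀ ℕ => v 1) h
    simp only [h1, s0_apply_1] at this
    omega
  rw [if_neg hif0, if_congr hif1 rfl rfl]
  have hintX : intX (intY natGF) (g + sY)
      = (if g 0 = 0 then 0
          else intY natGF ((g + sY) - sX) / (g 0 : ℚ)) := by
    rw [intX_apply, h0]
  rw [hintX]
  have hb : ((g 1 : ℚ) + 1) ≠ 0 := by positivity
  by_cases hg0 : g 0 = 0
  · rw [if_pos hg0, if_pos hg0]
    by_cases hg : g = 0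
    · rw [if_pos hg]
      have : g 1 = 0 := by rw [hg]; rfl
      rw [this]
      norm_num
    · rw [if_neg hg]
      ring
  · have hgne : ¬ g = 0 := by
      intro h
      apply hg0
      rw [h]
      rfl
    rw [if_neg hg0, if_neg hg0, if_neg hgne]
    have hsub1 : (g + sY) - sX
        = (g - sX) + sY := by
      ext x
      rw [Finsupp.tsub_apply, Finsupp.add_apply, Finsupp.add_apply, Finsupp.tsub_apply]
      fin_cases x
      · show g 0 + sY 0 - sX 0 = g 0 - sX 0 + sY 0
        rw [s1_apply_0, s0_apply_0]
        omega
      · show g 1 + sY 1 - sX 1 = g 1 - sX 1 + sY 1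
        rw [s1_apply_1, s0_apply_1]
        omega
    rw [hsub1]
    have hintY : intY natGF ((g - sX) + sY)
        = natGF (g - sX) / ((g 1 : ℚ) + 1) := by
      have hx : ((g - sX) + sY) 1 = g 1 + 1 := by
        simp [sX, sY, Finsupp.add_apply, Finsupp.tsub_apply, Finsupp.single_apply]
      rw [intY_apply, if_neg (by omega : ¬ ((g - sX) + sY) 1 = 0),
        add_tsub_cancel_right, hx]
      push_cast
      ring_nf
    have e0 : (g - sX) 0 = g 0 - 1 := by
      simp [sX, sY, Finsupp.tsub_apply, Finsupp.single_apply]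
    have e1 : (g - sX) 1 = g 1 := by
      simp [sX, sY, Finsupp.add_apply, Finsupp.tsub_apply, Finsupp.single_apply]
    rw [hintY, natGF_apply, e0, e1]
    have hfact : ((g 0).factorial : ℚ) = (g 0 : ℚ) * ((g 0 - 1).factorial : ℚ) := by
      rw [← Nat.mul_factorial_pred (by omega : g 0 ≠ 0)]
      push_cast
      ring
    rw [hfact]
    have h2 : ((g 1).factorial : ℚ) ≠ 0 := by positivity
    have h3 : ((g 0 - 1).factorial : ℚ) ≠ 0 := by positivity
    have h4 : (g 0 : ℚ) ≠ 0 := by simpa using hg0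
    field_simp
    ring

end PartF


-- Part G : the final theorem
section PartG

/-- `∂ₓ ∂_y L = (∂ₓ L) · (∂_y L)`. -/
theorem natL_pde : dX (dY natL) = dX natL * dY natL := by
  funext e
  rw [dXdY_natL]
  rw [show (dX natL * dY natL) e
      = ∑ p ∈ Finset.HasAntidiagonal.antidiagonal e, dX natL p.1 * dY natL p.2
    from MvPowerSeries.coeff_mul e _ _]
  have hexpand : (∑ p ∈ Finset.HasAntidiagonal.antidiagonal e, dX natL p.1 * dY natL p.2)
      = (∑ p ∈ Finset.HasAntidiagonal.antidiagonal e,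
          (if p.1 = 0 then (1:ℚ) else 0) * (if p.2 = 0 then (1:ℚ) else 0))
      + ((∑ p ∈ Finset.HasAntidiagonal.antidiagonal e,
          (if p.1 = 0 then (1:ℚ) else 0) *
            (if p.2 0 = 0 then 0
              else (natCount (p.2 0 - 1) (p.2 1) : ℚ)
                / ((p.2 0).factorial * (p.2 1).factorial)))
      + ((∑ p ∈ Finset.HasAntidiagonal.antidiagonal e,
          (if p.1 1 = 0 then 0
            else (natCount (p.1 0) (p.1 1 - 1) : ℚ)
              / ((p.1 0).factorial * (p.1 1).factorial)) * (if p.2 = 0 then (1:ℚ) else 0))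
      + (∑ p ∈ Finset.HasAntidiagonal.antidiagonal e,
          (if p.1 1 = 0 then 0
            else (natCount (p.1 0) (p.1 1 - 1) : ℚ)
              / ((p.1 0).factorial * (p.1 1).factorial)) *
          (if p.2 0 = 0 then 0
            else (natCount (p.2 0 - 1) (p.2 1) : ℚ)
              / ((p.2 0).factorial * (p.2 1).factorial))))) := by
    rw [← Finset.sum_add_distrib, ← Finset.sum_add_distrib, ← Finset.sum_add_distrib]
    refine Finset.sum_congr rfl (fun p hp => ?_)
    rw [dX_natL, dY_natL]
    ring
  rw [hexpand]
  -- the four pieces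
  have hzero : ∀ g : Fin 2 →₀ ℕ, g = 0 → g 0 = 0 ∧ g 1 = 0 := by
    intro g hg
    rw [hg]
    exact ⟨rfl, rfl⟩
  have hzero' : ∀ g : Fin 2 →₀ ℕ, g 0 = 0 → g 1 = 0 → g = 0 := by
    intro g h0 h1
    rw [fin2_eta g, h0, h1]
    simp
  have hS1 : (∑ p ∈ Finset.HasAntidiagonal.antidiagonal e,
      (if p.1 = 0 then (1:ℚ) else 0) * (if p.2 = 0 then (1:ℚ) else 0))
      = if e = 0 then 1 else 0 := by
    by_cases he : e = 0
    · rw [if_pos he, he]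
      rw [Finsupp.antidiagonal_zero, Finset.sum_singleton]
      simp
    · rw [if_neg he]
      refine Finset.sum_eq_zero (fun p hp => ?_)
      have hsum := Finset.HasAntidiagonal.mem_antidiagonal.1 hp
      by_cases h1 : p.1 = 0
      · have h2 : p.2 ≠ 0 := by
          intro h2
          apply he
          rw [← hsum, h1, h2, add_zero]
        rw [if_neg h2, mul_zero]
      · rw [if_neg h1, zero_mul]
  have hS2 : (∑ p ∈ Finset.HasAntidiagonal.antidiagonal e,
      (if p.1 = 0 then (1:ℚ) else 0) *
        (if p.2 0 = 0 then 0
          else (natCount (p.2 0 - 1) (p.2 1) : ℚ)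
            / ((p.2 0).factorial * (p.2 1).factorial)))
      = (if e 0 = 0 then 0
          else (natCount (e 0 - 1) (e 1) : ℚ) / ((e 0).factorial * (e 1).factorial)) := by
    rw [Finset.sum_eq_single_of_mem ((0 : Fin 2 →₀ ℕ), e)
      (Finset.HasAntidiagonal.mem_antidiagonal.2 (zero_add e)) ?_]
    · simp
    · intro p hp hne
      have hsum := Finset.HasAntidiagonal.mem_antidiagonal.1 hp
      by_cases h1 : p.1 = 0
      · exfalso
        apply hne
        have : p.2 = e := by rw [← hsum, h1, zero_add]
        rw [← h1, ← this]
      · rw [if_neg h1, zero_mul]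
  have hS3 : (∑ p ∈ Finset.HasAntidiagonal.antidiagonal e,
      (if p.1 1 = 0 then 0
        else (natCount (p.1 0) (p.1 1 - 1) : ℚ)
          / ((p.1 0).factorial * (p.1 1).factorial)) * (if p.2 = 0 then (1:ℚ) else 0))
      = (if e 1 = 0 then 0
          else (natCount (e 0) (e 1 - 1) : ℚ) / ((e 0).factorial * (e 1).factorial)) := by
    rw [Finset.sum_eq_single_of_mem (e, (0 : Fin 2 →₀ ℕ))
      (Finset.HasAntidiagonal.mem_antidiagonal.2 (add_zero e)) ?_]
    · simp
    · intro p hp hne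
      have hsum := Finset.HasAntidiagonal.mem_antidiagonal.1 hp
      by_cases h2 : p.2 = 0
      · exfalso
        apply hne
        have : p.1 = e := by rw [← hsum, h2, add_zero]
        rw [← h2, ← this]
      · rw [if_neg h2, mul_zero]
  have hS4 : (∑ p ∈ Finset.HasAntidiagonal.antidiagonal e,
      (if p.1 1 = 0 then 0
        else (natCount (p.1 0) (p.1 1 - 1) : ℚ)
          / ((p.1 0).factorial * (p.1 1).factorial)) *
      (if p.2 0 = 0 then 0
        else (natCount (p.2 0 - 1) (p.2 1) : ℚ)
          / ((p.2 0).factorial * (p.2 1).factorial)))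
      = ∑ i ∈ Finset.range (e 0 + 1), ∑ j ∈ Finset.range (e 1 + 1),
          (if j = 0 then 0
            else (natCount i (j - 1) : ℚ) / (i.factorial * j.factorial)) *
          (if e 0 - i = 0 then 0
            else (natCount (e 0 - i - 1) (e 1 - j) : ℚ)
              / ((e 0 - i).factorial * (e 1 - j).factorial)) := by
    have h' : (∑ p ∈ Finset.HasAntidiagonal.antidiagonal e,
        (if p.1 1 = 0 then 0
          else (natCount (p.1 0) (p.1 1 - 1) : ℚ)
            / ((p.1 0).factorial * (p.1 1).factorial)) *
        (if p.2 0 = 0 then 0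
          else (natCount (p.2 0 - 1) (p.2 1) : ℚ)
            / ((p.2 0).factorial * (p.2 1).factorial)))
        = ∑ q ∈ Finset.range (e 0 + 1) ×ˢ Finset.range (e 1 + 1),
            (if q.2 = 0 then 0
              else (natCount q.1 (q.2 - 1) : ℚ) / (q.1.factorial * q.2.factorial)) *
            (if e 0 - q.1 = 0 then 0
              else (natCount (e 0 - q.1 - 1) (e 1 - q.2) : ℚ)
                / ((e 0 - q.1).factorial * (e 1 - q.2).factorial)) := by
      refine Finset.sum_bij' (i := fun p _ => (p.1 0, p.1 1))
        (j := fun q _ => (Finsupp.single 0 q.1 + Finsupp.single 1 q.2,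
          Finsupp.single 0 (e 0 - q.1) + Finsupp.single 1 (e 1 - q.2)))
        ?_ ?_ ?_ ?_ ?_
      · intro p hp
        have hsum := Finset.HasAntidiagonal.mem_antidiagonal.1 hp
        have h0 : p.1 0 + p.2 0 = e 0 := by
          rw [← Finsupp.add_apply, hsum]
        have h1 : p.1 1 + p.2 1 = e 1 := by
          rw [← Finsupp.add_apply, hsum]
        show (p.1 0, p.1 1) ∈ Finset.range (e 0 + 1) ×ˢ Finset.range (e 1 + 1)
        rw [Finset.mem_product, Finset.mem_range, Finset.mem_range]
        omega
      · intro q hq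
        rw [Finset.mem_product, Finset.mem_range, Finset.mem_range] at hq
        rw [Finset.HasAntidiagonal.mem_antidiagonal]
        ext x
        rw [Finsupp.add_apply]
        fin_cases x
        · have h0 : e 0 = q.1 + (e 0 - q.1) := by omega
          simp [Finsupp.add_apply, Finsupp.single_apply]
          omega
        · simp [Finsupp.add_apply, Finsupp.single_apply]
          omega
      · intro p hp
        have hsum := Finset.HasAntidiagonal.mem_antidiagonal.1 hp
        have h0 : p.1 0 + p.2 0 = e 0 := by
          rw [← Finsupp.add_apply, hsum]
        have h1 : p.1 1 + p.2 1 = e 1 := by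
          rw [← Finsupp.add_apply, hsum]
        have hfst : Finsupp.single (0:Fin 2) (p.1 0) + Finsupp.single 1 (p.1 1) = p.1 :=
          (fin2_eta p.1).symm
        have hsnd : Finsupp.single (0:Fin 2) (e 0 - p.1 0) + Finsupp.single 1 (e 1 - p.1 1)
            = p.2 := by
          have hc0 : e 0 - p.1 0 = p.2 0 := by omega
          have hc1 : e 1 - p.1 1 = p.2 1 := by omega
          rw [hc0, hc1]
          exact (fin2_eta p.2).symm
        exact Prod.ext hfst hsnd
      · intro q hq
        simp [Prod.ext_iff, Finsupp.add_apply, Finsupp.single_apply]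
      · intro p hp
        have hsum := Finset.HasAntidiagonal.mem_antidiagonal.1 hp
        have h0 : p.1 0 + p.2 0 = e 0 := by
          rw [← Finsupp.add_apply, hsum]
        have h1 : p.1 1 + p.2 1 = e 1 := by
          rw [← Finsupp.add_apply, hsum]
        have hc0 : p.2 0 = e 0 - p.1 0 := by omega
        have hc1 : p.2 1 = e 1 - p.1 1 := by omega
        rw [hc0, hc1]
    rw [h', Finset.sum_product]
  rw [hS1, hS2, hS3, hS4]
  -- numeric identity from the recursion
  rw [natGF_apply, natCount_rec (e 0) (e 1)]
  have hfact0 : ((e 0).factorial : ℚ) ≠ 0 := by positivity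
  have hfact1 : ((e 1).factorial : ℚ) ≠ 0 := by positivity
  rw [Nat.cast_add, Nat.cast_add, Nat.cast_add, add_div, add_div, add_div]
  have hA : (((if e 0 = 0 ∧ e 1 = 0 then 1 else 0 : ℕ)) : ℚ)
      / ((e 0).factorial * (e 1).factorial) = (if e = 0 then 1 else 0 : ℚ) := by
    by_cases hab : e 0 = 0 ∧ e 1 = 0
    · rw [if_pos hab, if_pos (hzero' e hab.1 hab.2), hab.1, hab.2]
      norm_num
    · rw [if_neg hab, if_neg (fun h => hab ⟨(hzero e h).1, (hzero e h).2⟩)]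
      norm_num
  have hB : (((if e 1 = 0 then 0 else natCount (e 0) (e 1 - 1) : ℕ)) : ℚ)
      / ((e 0).factorial * (e 1).factorial)
      = (if e 1 = 0 then 0
          else (natCount (e 0) (e 1 - 1) : ℚ) / ((e 0).factorial * (e 1).factorial)) := by
    by_cases hb : e 1 = 0
    · rw [if_pos hb, if_pos hb]
      norm_num
    · rw [if_neg hb, if_neg hb]
  have hC : (((if e 0 = 0 then 0 else natCount (e 0 - 1) (e 1) : ℕ)) : ℚ)
      / ((e 0).factorial * (e 1).factorial)
      = (if e 0 = 0 then 0
          else (natCount (e 0 - 1) (e 1) : ℚ) / ((e 0).factorial * (e 1).factorial)) := by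
    by_cases ha : e 0 = 0
    · rw [if_pos ha, if_pos ha]
      norm_num
    · rw [if_neg ha, if_neg ha]
  have hD : (((∑ i ∈ Finset.range (e 0 + 1), ∑ j ∈ Finset.range (e 1 + 1),
        (if j = 0 ∨ i = e 0 then 0
          else (e 0).choose i * (e 1).choose j * natCount i (j-1)
            * natCount (e 0 - i - 1) (e 1 - j)) : ℕ)) : ℚ)
      / ((e 0).factorial * (e 1).factorial)
      = ∑ i ∈ Finset.range (e 0 + 1), ∑ j ∈ Finset.range (e 1 + 1),
          (if j = 0 then 0
            else (natCount i (j - 1) : ℚ) / (i.factorial * j.factorial)) *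
          (if e 0 - i = 0 then 0
            else (natCount (e 0 - i - 1) (e 1 - j) : ℚ)
              / ((e 0 - i).factorial * (e 1 - j).factorial)) := by
    rw [Nat.cast_sum, Finset.sum_div]
    refine Finset.sum_congr rfl (fun i hi => ?_)
    rw [Nat.cast_sum, Finset.sum_div]
    refine Finset.sum_congr rfl (fun j hj => ?_)
    rw [Finset.mem_range] at hi hj
    by_cases hc : j = 0 ∨ i = e 0
    · rw [if_pos hc]
      rcases hc with hc | hc
      · rw [if_pos hc]
        norm_num
      · rw [if_pos (by omega : e 0 - i = 0)]
        norm_num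
    · push_neg at hc
      rw [if_neg (by tauto), if_neg hc.1, if_neg (by omega : ¬ e 0 - i = 0)]
      push_cast
      rw [Nat.cast_choose ℚ (by omega : i ≤ e 0), Nat.cast_choose ℚ (by omega : j ≤ e 1)]
      have h1 : (i.factorial : ℚ) ≠ 0 := by positivity
      have h2 : (j.factorial : ℚ) ≠ 0 := by positivity
      have h3 : (((e 0 - i)).factorial : ℚ) ≠ 0 := by positivity
      have h4 : (((e 1 - j)).factorial : ℚ) ≠ 0 := by positivity
      field_simp
  rw [hA, hB, hC, hD]
  ring

end PartG
end

section
/- Fix integers d ≥ k ≥ 1. For every (d,k)-NAT of shape a (d,k)-ary tree M and every i ∈ {1,…,d}, the i-th coordinate w_i of the root label satisfies w_i = 1 + Σ_{π a (d,k)-direction with i ∈ π} |D_π(M)|. In particular the root label depends only on the shape M. -/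
/-- A `(d,k)`-direction: a `k`-element subset of the `d` coordinates. -/
abbrev Dir (d k : ℕ) := {π : Finset (Fin d) // π.card = k}

/-- A `(d,k)`-ary tree: every vertex has at most one child for each `(d,k)`-direction. -/
inductive KTree (d k : ℕ) : Type where
  | node : (Dir d k → Option (KTree d k)) → KTree d k

namespace KTree

variable {d k : ℕ}

/-- The subtree of a `(d,k)`-ary tree at a given position (path of directions),
if the position exists in the tree. -/
def subtreeAt : KTree d k → List (Dir d k) → Option (KTree d k)
  | t, [] => some t
  | .node c, π :: p =>
    match c π with
    | some t => subtreeAt t p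
    | none => none

/-- `p` is (the position of) a vertex of `M`. -/
def isVertex (M : KTree d k) (p : List (Dir d k)) : Prop := (M.subtreeAt p).isSome

end KTree

/-- The direction of the vertex at position `p`: the direction indexing it as a child of its
parent; the root (empty position) has direction `{1,…,d}`. -/
def dirOf {d k : ℕ} (p : List (Dir d k)) : Finset (Fin d) :=
  (p.getLast?).elim Finset.univ Subtype.val

/-- A non-ambiguous tree of dimension `(d,k)` of shape `M`: each vertex of direction `π`
carries a tuple of positive integers indexed by `π` (the root carrying a full `d`-tuple),
encoded as a function `lbl` which vanishes at the unused positions; entries strictly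
decrease from ancestors to descendants, and for each coordinate `i` the `i`-th entries are
pairwise distinct and form an integer interval with minimum `1`. -/
structure KNAT (d k : ℕ) (M : KTree d k) where
  lbl : List (Dir d k) → Fin d → ℕ
  supp : ∀ p i, ¬(M.isVertex p ∧ i ∈ dirOf p) → lbl p i = 0
  anc : ∀ p q, M.isVertex p → M.isVertex q → p <+: q → p ≠ q →
    ∀ i, i ∈ dirOf p → i ∈ dirOf q → lbl q i < lbl p i
  inj : ∀ i : Fin d, Set.InjOn (fun p => lbl p i) {p | M.isVertex p ∧ i ∈ dirOf p}
  interval : ∀ i : Fin d,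
    (fun p => lbl p i) '' {p | M.isVertex p ∧ i ∈ dirOf p} =
      Set.Icc 1 (Set.ncard {p | M.isVertex p ∧ i ∈ dirOf p})

/-- For every `(d,k)`-NAT `N` of shape `M` and every coordinate `i`, the
`i`-th entry of the root label is `1 + Σ_{π ∋ i} |D_π(M)|`, where `D_π(M)` is the set of
non-root vertices of `M` of direction `π`. In particular it only depends on the shape `M`. -/
theorem knat_root_label (d k : ℕ) (hk : 1 ≤ k) (hkd : k ≤ d)
    (M : KTree d k) (N : KNAT d k M) (i : Fin d) :
    N.lbl [] i =
      1 + ∑ π : Dir d k,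
        if i ∈ π.1 then
          Set.ncard {p : List (Dir d k) | M.isVertex p ∧ p.getLast? = some π}
        else 0 := by
  classical
  set S : Set (List (Dir d k)) := {p | M.isVertex p ∧ i ∈ dirOf p} with hSdef
  have hroot : ([] : List (Dir d k)) ∈ S := by
    refine ⟨?_, ?_⟩
    · simp [KTree.isVertex, KTree.subtreeAt]
    · simp [dirOf]
  have himg := N.interval i
  have h1 : N.lbl [] i ∈ Set.Icc 1 S.ncard := by
    rw [← himg]; exact ⟨[], hroot, rfl⟩
  have hn1 : 1 ≤ S.ncard := le_trans h1.1 h1.2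
  have hfin : S.Finite := by
    by_contra h
    rw [Set.Infinite.ncard h] at hn1
    omega
  -- root label equals ncard S
  have hmax : N.lbl [] i = S.ncard := by
    have hmem : S.ncard ∈ Set.Icc 1 S.ncard := ⟨hn1, le_rfl⟩
    rw [← himg] at hmem
    obtain ⟨p, hp, hpe⟩ := hmem
    rcases eq_or_ne p [] with rfl | hne
    · exact hpe
    · have hlt := N.anc [] p hroot.1 hp.1 List.nil_prefix (Ne.symm hne) i
        (by simp [dirOf]) hp.2
      simp only at hpe
      have h2 := h1.2
      omega
  rw [hmax]
  -- count S fiberwise by last direction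
  have hcard : S.ncard = hfin.toFinset.card := Set.ncard_eq_toFinset_card S hfin
  have hfib := Finset.card_eq_sum_card_fiberwise
    (f := fun p : List (Dir d k) => p.getLast?) (s := hfin.toFinset)
    (t := Finset.univ) (fun x _ => Finset.mem_univ _)
  rw [hcard, hfib, Fintype.sum_option]
  congr 1
  · -- fiber of `none` is the root only
    have : hfin.toFinset.filter (fun p => p.getLast? = none) = {[]} := by
      ext p
      simp only [Finset.mem_filter, Set.Finite.mem_toFinset, Finset.mem_singleton,
        List.getLast?_eq_none_iff]
      constructor
      · rintro ⟨_, h⟩; exact h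
      · rintro rfl; exact ⟨hroot, rfl⟩
    rw [this, Finset.card_singleton]
  · refine Finset.sum_congr rfl fun π _ => ?_
    by_cases hiπ : i ∈ π.1
    · rw [if_pos hiπ]
      have hset : {p : List (Dir d k) | M.isVertex p ∧ p.getLast? = some π} =
          ↑(hfin.toFinset.filter (fun p => p.getLast? = some π)) := by
        ext p
        simp only [Set.mem_setOf_eq, Finset.coe_filter, Set.Finite.mem_toFinset,
          Set.mem_setOf_eq]
        constructor
        · rintro ⟨hv, hl⟩
          exact ⟨⟨hv, by simp [dirOf, hl, hiπ]⟩, hl⟩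
        · rintro ⟨⟨hv, _⟩, hl⟩
          exact ⟨hv, hl⟩
      rw [hset, Set.ncard_coe_finset]
    · rw [if_neg hiπ]
      have : hfin.toFinset.filter (fun p => p.getLast? = some π) = ∅ := by
        ext p
        simp only [Finset.mem_filter, Set.Finite.mem_toFinset, Finset.notMem_empty,
          iff_false, not_and]
        rintro ⟨hv, hi⟩ hl
        rw [dirOf, hl] at hi
        exact hiπ hi
      rw [this, Finset.card_empty]
end

section
/- Fix integers d > k ≥ 1. For all positive integers m_1,…,m_{d−1}, the number of (d,k)-NATs whose root label is (m_1,…,m_{d−1},1) equals the number of (d−1,k)-NATs whose root label is (m_1,…,m_{d−1}). -/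
namespace NATAux
open KTree
variable {d k : ℕ}

/-! ### Directions -/

def emb : Fin (d-1) ↪ Fin d := Fin.castLEEmb (Nat.sub_le d 1)

def dLift (π : Dir (d-1) k) : Dir d k := ⟨π.1.map emb, by simp [π.2]⟩

lemma dLift_injective : Function.Injective (dLift (d:=d) (k:=k)) := by
  intro a b h
  apply Subtype.ext
  have := congrArg Subtype.val h
  simpa [dLift, Finset.map_injective] using this

lemma mem_dLift (π : Dir (d-1) k) (j : Fin (d-1)) : emb j ∈ (dLift π).1 ↔ j ∈ π.1 := by
  simp [dLift]

def goodDir (π : Dir d k) : Prop := ∀ i ∈ π.1, (i:ℕ) < d - 1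

instance : DecidablePred (goodDir (d:=d) (k:=k)) := fun π => by
  unfold goodDir; infer_instance

def resDir (π : Dir d k) (h : goodDir π) : Dir (d-1) k :=
  ⟨π.1.attach.map ⟨fun x => ⟨x.1, h x.1 x.2⟩,
      by intro a b hab; have hv := congrArg Fin.val hab; exact Subtype.ext (Fin.ext hv)⟩,
   by simp [π.2]⟩

lemma goodDir_dLift (π : Dir (d-1) k) : goodDir (dLift π) := by
  intro i hi
  simp [dLift, emb] at hi
  obtain ⟨j, hj, rfl⟩ := hi
  simpa using j.2

lemma dLift_resDir (π : Dir d k) (h : goodDir π) : dLift (resDir π h) = π := by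
  apply Subtype.ext
  ext i
  simp only [dLift, resDir, Finset.mem_map, Finset.mem_attach, true_and, Subtype.exists,
    Function.Embedding.coeFn_mk]
  constructor
  · rintro ⟨a, ha, rfl⟩
    obtain ⟨b, hb, rfl⟩ := ha
    have : emb (⟨(b:ℕ), h b hb⟩ : Fin (d-1)) = b := by simp [emb, Fin.ext_iff]
    exact (congrArg (· ∈ π.1) this).mpr hb
  · intro hi
    exact ⟨⟨i, h i hi⟩, ⟨i, hi, rfl⟩, by simp [emb, Fin.ext_iff]⟩

lemma resDir_dLift (π : Dir (d-1) k) (h : goodDir (dLift π)) : resDir (dLift π) h = π :=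
  dLift_injective (dLift_resDir _ _)

/-! ### Tree recursion -/

noncomputable def fold {A : Type} (f : (Dir d k → Option (KTree d k)) → (Dir d k → Option A) → A) :
    KTree d k → A :=
  KTree.rec (motive_1 := fun _ => A) (motive_2 := fun _ => Option A)
    (fun c r => f c r) none (fun _ a => some a)

theorem fold_node {A : Type} (f) (c : Dir d k → Option (KTree d k)) :
    fold (A := A) f (.node c) = f c (fun π => Option.map (fold f) (c π)) := by
  show f c _ = _
  congr 1
  funext π
  cases c π <;> rfl

theorem ktree_ind (P : KTree d k → Prop)
    (h : ∀ c, (∀ π t, c π = some t → P t) → P (.node c)) : ∀ t, P t := by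
  intro t
  induction t using KTree.rec (motive_2 := fun o => ∀ t, o = some t → P t) with
  | node c ih => exact h c fun π t ht => ih π t ht
  | none => cases ‹none = some _›
  | some v hv => injection ‹some v = some _› with h; exact h ▸ hv

/-! ### Lifting and restricting trees -/

noncomputable def liftT : KTree (d-1) k → KTree d k :=
  fold fun _ r => .node fun π => if h : goodDir π then r (resDir π h) else none

theorem liftT_node (c : Dir (d-1) k → Option (KTree (d-1) k)) :
    liftT (.node c) = .node fun π =>
      if h : goodDir π then Option.map liftT (c (resDir π h)) else none :=
  fold_node _ c

noncomputable def resT : KTree d k → KTree (d-1) k :=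
  fold fun _ r => .node fun π => r (dLift π)

theorem resT_node (c : Dir d k → Option (KTree d k)) :
    resT (.node c) = .node fun π => Option.map resT (c (dLift π)) :=
  fold_node _ c

def goodPos (q : List (Dir d k)) : Prop := ∀ π ∈ q, goodDir π

instance : DecidablePred (goodPos (d:=d) (k:=k)) := fun q => by
  unfold goodPos; infer_instance

def resList (q : List (Dir d k)) (h : goodPos q) : List (Dir (d-1) k) :=
  q.pmap resDir h

lemma map_dLift_resList (q : List (Dir d k)) (h : goodPos q) :
    (resList q h).map dLift = q := by
  induction q with
  | nil => rfl
  | cons π p ih =>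
    simp only [resList, List.pmap, List.map_cons, dLift_resDir]
    exact congrArg _ (ih _)

lemma goodPos_map_dLift (p : List (Dir (d-1) k)) : goodPos (p.map dLift) := by
  intro π hπ
  simp only [List.mem_map] at hπ
  obtain ⟨π', _, rfl⟩ := hπ
  exact goodDir_dLift π'

lemma resList_map_dLift (p : List (Dir (d-1) k)) (h : goodPos (p.map dLift)) :
    resList (p.map dLift) h = p := by
  exact List.map_injective_iff.mpr dLift_injective (map_dLift_resList (p.map dLift) h)

lemma map_dLift_injective :
    Function.Injective (List.map (dLift (d:=d) (k:=k))) :=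
  List.map_injective_iff.mpr dLift_injective

/-! ### subtreeAt transport -/

lemma subtreeAt_liftT (p : List (Dir (d-1) k)) : ∀ (t : KTree (d-1) k),
    (liftT t).subtreeAt (p.map dLift) = Option.map liftT (t.subtreeAt p) := by
  induction p with
  | nil => intro t; simp [KTree.subtreeAt]
  | cons π p ih =>
    rintro ⟨c⟩
    rw [liftT_node]
    show KTree.subtreeAt _ (dLift π :: p.map dLift) = _
    rw [KTree.subtreeAt]
    simp only [goodDir_dLift, dite_true, resDir_dLift]
    cases hc : c π with
    | none => simp [KTree.subtreeAt, hc]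
    | some t' => simpa [KTree.subtreeAt, hc] using ih t'

lemma subtreeAt_liftT_bad (q : List (Dir d k)) (hq : ¬ goodPos q) : ∀ (t : KTree (d-1) k),
    (liftT t).subtreeAt q = none := by
  induction q with
  | nil => exact absurd (by intro π h; cases h) hq
  | cons π p ih =>
    rintro ⟨c⟩
    rw [liftT_node, KTree.subtreeAt]
    by_cases h : goodDir π
    · simp only [h, dite_true]
      cases hc : c (resDir π h) with
      | none => rfl
      | some t' =>
        have : ¬ goodPos p := fun hp =>
          hq (fun π' hm => (List.mem_cons.mp hm).elim (fun e => e ▸ h) (hp π'))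
        simpa [hc] using ih this (t')
    · simp [h]

lemma isVertex_liftT (t : KTree (d-1) k) (q : List (Dir d k)) :
    (liftT t).isVertex q ↔ ∃ p, t.isVertex p ∧ q = p.map dLift := by
  constructor
  · intro hv
    by_cases hq : goodPos q
    · refine ⟨resList q hq, ?_, (map_dLift_resList q hq).symm⟩
      have := subtreeAt_liftT (resList q hq) t
      rw [map_dLift_resList] at this
      unfold KTree.isVertex at hv ⊢
      rw [this] at hv
      cases h : t.subtreeAt (resList q hq) with
      | none => rw [h] at hv; simp at hv
      | some _ => simp [h]
    · unfold KTree.isVertex at hv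
      rw [subtreeAt_liftT_bad q hq] at hv
      simp at hv
  · rintro ⟨p, hp, rfl⟩
    unfold KTree.isVertex at hp ⊢
    rw [subtreeAt_liftT]
    cases h : t.subtreeAt p with
    | none => rw [h] at hp; simp at hp
    | some _ => simp [h]

lemma subtreeAt_resT (p : List (Dir (d-1) k)) : ∀ (t : KTree d k),
    (resT t).subtreeAt p = Option.map resT (t.subtreeAt (p.map dLift)) := by
  induction p with
  | nil => intro t; simp [KTree.subtreeAt]
  | cons π p ih =>
    rintro ⟨c⟩
    rw [resT_node]
    show KTree.subtreeAt _ (π :: p) = _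
    rw [KTree.subtreeAt]
    cases hc : c (dLift π) with
    | none => simp [KTree.subtreeAt, hc]
    | some t' => simpa [KTree.subtreeAt, hc] using ih t'

lemma isVertex_resT (t : KTree d k) (p : List (Dir (d-1) k)) :
    (resT t).isVertex p ↔ t.isVertex (p.map dLift) := by
  unfold KTree.isVertex
  rw [subtreeAt_resT]
  cases t.subtreeAt (p.map dLift) <;> simp

/-! ### dirOf transport -/

lemma dirOf_map_dLift (p : List (Dir (d-1) k)) (j : Fin (d-1)) :
    emb j ∈ dirOf (p.map dLift) ↔ j ∈ dirOf p := by
  unfold dirOf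
  rw [List.getLast?_map]
  cases p.getLast? with
  | none => simp
  | some π => simpa using mem_dLift π j

lemma not_mem_dirOf_of_good (q : List (Dir d k)) (hq : goodPos q) (hne : q ≠ [])
    (i : Fin d) (hi : ¬ ((i:ℕ) < d - 1)) : i ∉ dirOf q := by
  unfold dirOf
  rw [List.getLast?_eq_getLast_of_ne_nil hne]
  intro hmem
  exact hi (hq _ (List.getLast_mem hne) i hmem)

lemma emb_eq (i : Fin d) (hi : (i:ℕ) < d - 1) : emb ⟨(i:ℕ), hi⟩ = i := by
  simp [emb, Fin.ext_iff]

/-! ### misc -/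

lemma prefix_of_map_prefix {α β} (f : α → β) (hf : Function.Injective f) (p q : List α)
    (h : p.map f <+: q.map f) : p <+: q := by
  have h2 : p.map f = ((q.take p.length).map f) := by
    rw [List.map_take]
    simpa using List.prefix_iff_eq_take.mp h
  exact (List.map_injective_iff.mpr hf h2) ▸ List.take_prefix _ _

lemma isVertex_nil (t : KTree d k) : t.isVertex [] := by
  cases t; simp [KTree.isVertex, KTree.subtreeAt]

lemma subtreeAt_append (p r : List (Dir d k)) : ∀ (t : KTree d k),
    t.subtreeAt (p ++ r) = (t.subtreeAt p).bind (fun t' => t'.subtreeAt r) := by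
  induction p with
  | nil => intro t; simp [KTree.subtreeAt]
  | cons π p ih =>
    rintro ⟨c⟩
    show KTree.subtreeAt _ (π :: (p ++ r)) = _
    rw [KTree.subtreeAt]
    cases hc : c π with
    | none => simp [KTree.subtreeAt, hc]
    | some t' => simpa [KTree.subtreeAt, hc] using ih t'

lemma isVertex_of_prefix {t : KTree d k} {p q : List (Dir d k)} (hpq : p <+: q)
    (hq : t.isVertex q) : t.isVertex p := by
  obtain ⟨r, rfl⟩ := hpq
  unfold KTree.isVertex at hq ⊢
  rw [subtreeAt_append] at hq
  cases h : t.subtreeAt p with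
  | none => rw [h] at hq; simp at hq
  | some _ => simp

lemma isVertex_cons {c : Dir d k → Option (KTree d k)} {π : Dir d k} {t : KTree d k}
    (hc : c π = some t) {q : List (Dir d k)} (hq : t.isVertex q) :
    (KTree.node c).isVertex (π :: q) := by
  unfold KTree.isVertex at hq ⊢
  show (KTree.subtreeAt _ (π :: q)).isSome
  rw [KTree.subtreeAt]
  simpa [hc] using hq

lemma goodDir_of_isVertex_cons {c : Dir d k → Option (KTree d k)} {π : Dir d k}
    (hgood : ∀ q, (KTree.node c).isVertex q → goodPos q) {t : KTree d k}
    (hc : c π = some t) : goodDir π :=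
  hgood [π] (isVertex_cons hc (isVertex_nil t)) π (by simp)

/-! ### vertex sets -/

lemma vertexSet_liftT (M : KTree (d-1) k) (j : Fin (d-1)) :
    {q | (liftT M).isVertex q ∧ emb j ∈ dirOf q} =
      (List.map dLift) '' {p | M.isVertex p ∧ j ∈ dirOf p} := by
  ext q
  constructor
  · rintro ⟨hv, hm⟩
    obtain ⟨p, hp, rfl⟩ := (isVertex_liftT M q).mp hv
    exact ⟨p, ⟨hp, (dirOf_map_dLift p j).mp hm⟩, rfl⟩
  · rintro ⟨p, ⟨hp, hm⟩, rfl⟩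
    exact ⟨(isVertex_liftT M _).mpr ⟨p, hp, rfl⟩, (dirOf_map_dLift p j).mpr hm⟩

lemma vertexSet_liftT_last (M : KTree (d-1) k) (i : Fin d) (hi : ¬ ((i:ℕ) < d - 1)) :
    {q | (liftT M).isVertex q ∧ i ∈ dirOf q} = {([] : List (Dir d k))} := by
  ext q
  constructor
  · rintro ⟨hv, hm⟩
    obtain ⟨p, hp, rfl⟩ := (isVertex_liftT M q).mp hv
    by_contra hne
    exact not_mem_dirOf_of_good _ (goodPos_map_dLift p) hne i hi hm
  · rintro rfl
    exact ⟨isVertex_nil _, by simp [dirOf]⟩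

/-! ### lifting labels -/

noncomputable def liftLbl (M : KTree (d-1) k) (N : KNAT (d-1) k M) (q : List (Dir d k))
    (i : Fin d) : ℕ :=
  if hq : goodPos q then
    if hi : (i:ℕ) < d - 1 then N.lbl (resList q hq) ⟨i, hi⟩
    else if q = [] then 1 else 0
  else 0

lemma liftLbl_map (M : KTree (d-1) k) (N : KNAT (d-1) k M) (p : List (Dir (d-1) k))
    (j : Fin (d-1)) : liftLbl M N (p.map dLift) (emb j) = N.lbl p j := by
  have hg := goodPos_map_dLift (d:=d) p
  have hj : ((emb j : Fin d) : ℕ) < d - 1 := j.2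
  rw [liftLbl, dif_pos hg, dif_pos hj, resList_map_dLift]
  congr 1

noncomputable def liftN (M : KTree (d-1) k) (N : KNAT (d-1) k M) : KNAT d k (liftT M) where
  lbl := liftLbl M N
  supp := by
    intro q i hni
    rw [liftLbl]
    split_ifs with hq hi hqe
    · -- good, i < d-1 : use N.supp
      apply N.supp
      rintro ⟨hv, hm⟩
      apply hni
      have hq' : q = (resList q hq).map dLift := (map_dLift_resList q hq).symm
      constructor
      · rw [hq']; exact (isVertex_liftT M _).mpr ⟨_, hv, rfl⟩
      · rw [hq']
        have := (dirOf_map_dLift (resList q hq) ⟨i, hi⟩).mpr hm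
        rwa [emb_eq i hi] at this
    · -- q = [] : contradiction with hni
      exact absurd ⟨hqe ▸ isVertex_nil _, hqe ▸ (by simp [dirOf])⟩ hni
    · rfl
    · rfl
  anc := by
    intro p q hp hq hpq hne i hip hiq
    obtain ⟨p', hp', rfl⟩ := (isVertex_liftT M p).mp hp
    obtain ⟨q', hq', rfl⟩ := (isVertex_liftT M q).mp hq
    have hqne : q'.map dLift ≠ [] := by
      intro hq0
      rw [hq0] at hpq
      have h0 := List.prefix_nil.mp hpq
      exact hne (by rw [h0, hq0])
    by_cases hi : (i:ℕ) < d - 1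
    · rw [← emb_eq i hi] at hip hiq
      rw [← emb_eq i hi, liftLbl_map, liftLbl_map]
      exact N.anc p' q' hp' hq'
        (prefix_of_map_prefix _ dLift_injective _ _ hpq)
        (fun h => hne (h ▸ rfl))
        ⟨i, hi⟩ ((dirOf_map_dLift p' _).mp hip) ((dirOf_map_dLift q' _).mp hiq)
    · exact absurd hiq (not_mem_dirOf_of_good _ (goodPos_map_dLift q') hqne i hi)
  inj := by
    intro i
    by_cases hi : (i:ℕ) < d - 1
    · rw [← emb_eq i hi, vertexSet_liftT]
      rintro q1 ⟨p1, hp1, rfl⟩ q2 ⟨p2, hp2, rfl⟩ hval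
      simp only [liftLbl_map] at hval
      exact congrArg _ (N.inj ⟨i, hi⟩ hp1 hp2 hval)
    · rw [vertexSet_liftT_last M i hi]
      rintro q1 rfl q2 rfl _
      rfl
  interval := by
    intro i
    by_cases hi : (i:ℕ) < d - 1
    · rw [← emb_eq i hi, vertexSet_liftT, Set.ncard_image_of_injective _ map_dLift_injective,
        ← Set.image_comp]
      have : ((fun q => liftLbl M N q (emb ⟨(i:ℕ), hi⟩)) ∘ List.map dLift) =
          fun p => N.lbl p ⟨(i:ℕ), hi⟩ := by
        funext p
        exact liftLbl_map M N p _
      rw [this]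
      exact N.interval ⟨(i:ℕ), hi⟩
    · rw [vertexSet_liftT_last M i hi]
      have h1 : liftLbl M N [] i = 1 := by
        rw [liftLbl, dif_pos (by intro π h; cases h), dif_neg hi, if_pos rfl]
      simp [Set.ncard_singleton, h1]

/-! ### goodness from root label -/

lemma good_of_root_one {M : KTree d k} (N : KNAT d k M)
    (hroot : ∀ i : Fin d, ¬((i:ℕ) < d - 1) → N.lbl [] i = 1) :
    ∀ q, M.isVertex q → goodPos q := by
  intro q hq π hπ i hi
  by_contra hbad
  obtain ⟨a, b, rfl⟩ := List.append_of_mem hπ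
  have hpq : a ++ [π] <+: a ++ π :: b := ⟨b, by simp⟩
  have hpv : M.isVertex (a ++ [π]) := isVertex_of_prefix hpq hq
  have hpne : a ++ [π] ≠ [] := by simp
  have hdir : dirOf (a ++ [π]) = π.1 := by
    simp [dirOf, List.getLast?_concat]
  have h1 : N.lbl (a ++ [π]) i < N.lbl [] i :=
    N.anc [] (a ++ [π]) (isVertex_nil M) hpv List.nil_prefix
      (fun h => hpne h.symm) i (by simp [dirOf]) (hdir ▸ hi)
  rw [hroot i hbad] at h1
  have h2 : N.lbl (a ++ [π]) i ∈ (fun p => N.lbl p i) '' {p | M.isVertex p ∧ i ∈ dirOf p} :=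
    ⟨a ++ [π], ⟨hpv, hdir ▸ hi⟩, rfl⟩
  rw [N.interval i] at h2
  have := h2.1
  omega

/-! ### restricting labels -/

noncomputable def resLbl (M : KTree d k) (N : KNAT d k M) (p : List (Dir (d-1) k))
    (j : Fin (d-1)) : ℕ :=
  N.lbl (p.map dLift) (emb j)

lemma vertexSet_resT {M : KTree d k} (hgood : ∀ q, M.isVertex q → goodPos q) (j : Fin (d-1)) :
    {q | M.isVertex q ∧ emb j ∈ dirOf q} =
      (List.map dLift) '' {p | (resT M).isVertex p ∧ j ∈ dirOf p} := by
  ext q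
  constructor
  · rintro ⟨hv, hm⟩
    have hg := hgood q hv
    refine ⟨resList q hg, ⟨?_, ?_⟩, map_dLift_resList q hg⟩
    · rw [isVertex_resT, map_dLift_resList]
      exact hv
    · rw [← dirOf_map_dLift, map_dLift_resList]
      exact hm
  · rintro ⟨p, ⟨hv, hm⟩, rfl⟩
    exact ⟨(isVertex_resT M p).mp hv, (dirOf_map_dLift p j).mpr hm⟩

noncomputable def resN (M : KTree d k) (N : KNAT d k M)
    (hgood : ∀ q, M.isVertex q → goodPos q) : KNAT (d-1) k (resT M) where
  lbl := resLbl M N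
  supp := by
    intro p j hn
    apply N.supp
    rintro ⟨hv, hm⟩
    exact hn ⟨(isVertex_resT M p).mpr hv, (dirOf_map_dLift p j).mp hm⟩
  anc := by
    intro p q hp hq hpq hne j hjp hjq
    exact N.anc (p.map dLift) (q.map dLift) ((isVertex_resT M p).mp hp)
      ((isVertex_resT M q).mp hq) (hpq.map _)
      (fun h => hne (map_dLift_injective h)) (emb j)
      ((dirOf_map_dLift p j).mpr hjp) ((dirOf_map_dLift q j).mpr hjq)
  inj := by
    intro j p1 hp1 p2 hp2 hval
    apply map_dLift_injective
    exact N.inj (emb j)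
      ⟨(isVertex_resT M p1).mp hp1.1, (dirOf_map_dLift p1 j).mpr hp1.2⟩
      ⟨(isVertex_resT M p2).mp hp2.1, (dirOf_map_dLift p2 j).mpr hp2.2⟩ hval
  interval := by
    intro j
    have hset := vertexSet_resT hgood j
    have himg : (fun p => resLbl M N p j) '' {p | (resT M).isVertex p ∧ j ∈ dirOf p} =
        (fun q => N.lbl q (emb j)) '' {q | M.isVertex q ∧ emb j ∈ dirOf q} := by
      rw [hset, ← Set.image_comp]
      rfl
    have hcard : Set.ncard {q | M.isVertex q ∧ emb j ∈ dirOf q} =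
        Set.ncard {p | (resT M).isVertex p ∧ j ∈ dirOf p} := by
      rw [hset, Set.ncard_image_of_injective _ map_dLift_injective]
    rw [himg, N.interval (emb j), hcard]

/-! ### tree roundtrips -/

lemma resT_liftT (t : KTree (d-1) k) : resT (liftT t) = t := by
  induction t using ktree_ind with
  | _ c ih =>
    rw [liftT_node, resT_node]
    congr 1
    funext π
    simp only [goodDir_dLift, dite_true, resDir_dLift]
    cases hc : c π with
    | none => simp [hc]
    | some t => simp [hc, ih π t hc]

lemma liftT_resT : ∀ M : KTree d k, (∀ q, M.isVertex q → goodPos q) → liftT (resT M) = M := by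
  refine ktree_ind _ ?_
  intro c ih hgood
  rw [resT_node, liftT_node]
  congr 1
  funext π
  by_cases h : goodDir π
  · rw [dif_pos h]
    have hre : dLift (resDir π h) = π := dLift_resDir π h
    rw [hre]
    cases hc : c π with
    | none => simp [hc]
    | some t =>
      have hsub : ∀ q, t.isVertex q → goodPos q := fun q hv π' hm =>
        hgood (π :: q) (isVertex_cons hc hv) π' (List.mem_cons_of_mem _ hm)
      simp [hc, ih π t hc hsub]
  · rw [dif_neg h]
    cases hc : c π with
    | none => rfl
    | some t => exact absurd (goodDir_of_isVertex_cons hgood hc) h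

/-! ### extensionality -/

lemma knat_ext {M : KTree d k} {N N' : KNAT d k M} (h : N.lbl = N'.lbl) : N = N' := by
  cases N; cases N'; cases h; rfl

lemma sigma_ext {M M' : KTree d k} (h : M = M') {N : KNAT d k M} {N' : KNAT d k M'}
    (h2 : N.lbl = N'.lbl) : (⟨M, N⟩ : Σ M, KNAT d k M) = ⟨M', N'⟩ := by
  subst h
  rw [knat_ext h2]

/-! ### label roundtrips -/

lemma resLbl_liftN (M : KTree (d-1) k) (N : KNAT (d-1) k M) :
    resLbl (liftT M) (liftN M N) = N.lbl := by
  funext p j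
  exact liftLbl_map M N p j

lemma liftLbl_resN (M : KTree d k) (N : KNAT d k M)
    (hgood : ∀ q, M.isVertex q → goodPos q)
    (hroot : ∀ i : Fin d, ¬((i:ℕ) < d - 1) → N.lbl [] i = 1) :
    liftLbl (resT M) (resN M N hgood) = N.lbl := by
  funext q i
  rw [liftLbl]
  split_ifs with hq hi hqe
  · show N.lbl ((resList q hq).map dLift) (emb ⟨(i:ℕ), hi⟩) = N.lbl q i
    rw [map_dLift_resList, emb_eq i hi]
  · rw [hqe, hroot i hi]
  · symm
    apply N.supp
    rintro ⟨hv, hm⟩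
    exact not_mem_dirOf_of_good q hq hqe i hi hm
  · symm
    apply N.supp
    rintro ⟨hv, _⟩
    exact hq (hgood q hv)

end NATAux

open NATAux

/-- For `d > k ≥ 1` and positive integers `m_1,…,m_{d−1}`, the number of
`(d,k)`-NATs with root label `(m_1,…,m_{d−1},1)` equals the number of `(d−1,k)`-NATs with
root label `(m_1,…,m_{d−1})`. -/
theorem knat_card_last_coord_one (d k : ℕ) (hk : 1 ≤ k) (hkd : k < d)
    (m : Fin (d - 1) → ℕ) (hm : ∀ i, 1 ≤ m i) :
    Nat.card {N : Σ M : KTree d k, KNAT d k M //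
        ∀ i : Fin d, N.2.lbl [] i = if h : (i : ℕ) < d - 1 then m ⟨i, h⟩ else 1} =
      Nat.card {N : Σ M : KTree (d - 1) k, KNAT (d - 1) k M //
        ∀ i : Fin (d - 1), N.2.lbl [] i = m i} := by
  apply Nat.card_congr
  refine ⟨fun x => ?_, fun y => ?_, ?_, ?_⟩
  · -- toFun : restrict
    obtain ⟨⟨M, N⟩, hr⟩ := x
    have hroot : ∀ i : Fin d, ¬((i:ℕ) < d - 1) → N.lbl [] i = 1 := by
      intro i hi
      rw [hr i, dif_neg hi]
    refine ⟨⟨resT M, resN M N (good_of_root_one N hroot)⟩, ?_⟩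
    intro j
    show resLbl M N [] j = m j
    have hj : ((emb j : Fin d) : ℕ) < d - 1 := j.2
    rw [resLbl, List.map_nil, hr (emb j), dif_pos hj]
    congr 1
  · -- invFun : lift
    obtain ⟨⟨M, N⟩, hr⟩ := y
    refine ⟨⟨liftT M, liftN M N⟩, ?_⟩
    intro i
    show liftLbl M N [] i = _
    rw [liftLbl, dif_pos (by intro π h; cases h)]
    by_cases hi : (i:ℕ) < d - 1
    · rw [dif_pos hi, dif_pos hi]
      exact hr _
    · rw [dif_neg hi, dif_neg hi, if_pos rfl]
  · -- left inverse
    rintro ⟨⟨M, N⟩, hr⟩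
    apply Subtype.ext
    have hroot : ∀ i : Fin d, ¬((i:ℕ) < d - 1) → N.lbl [] i = 1 := by
      intro i hi
      rw [hr i, dif_neg hi]
    have hgood := good_of_root_one N hroot
    exact sigma_ext (liftT_resT M hgood) (liftLbl_resN M N hgood hroot)
  · -- right inverse
    rintro ⟨⟨M, N⟩, hr⟩
    apply Subtype.ext
    exact sigma_ext (resT_liftT M) (resLbl_liftN M N)
end

section
/- Let d ≥ 2 be an integer and let s : ℝ^d → ℝ be a C^∞ function satisfying ∂_1∂_2⋯∂_d s = ∏_{i=1}^d ∂_i s everywhere on ℝ^d (where ∂_i is the partial derivative in the i-th variable). Then for all C^∞ functions s_1,…,s_d : ℝ → ℝ, the function u(x_1,…,x_d) := s(s_1(x_1),…,s_d(x_d)) also satisfies ∂_1∂_2⋯∂_d u = ∏_{i=1}^d ∂_i u everywhere on ℝ^d. -/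
/-- The partial derivative of `f : ℝ^d → ℝ` in the `i`-th coordinate direction. -/
noncomputable def pder {d : ℕ} (i : Fin d) (f : (Fin d → ℝ) → ℝ) : (Fin d → ℝ) → ℝ :=
  fun x => fderiv ℝ f x (Pi.single i 1)

/-- The mixed partial derivative `∂_1 ∂_2 ⋯ ∂_d f`, taken once in each coordinate. -/
noncomputable def mixedDer {d : ℕ} (f : (Fin d → ℝ) → ℝ) : (Fin d → ℝ) → ℝ :=
  (List.finRange d).foldr pder f

section Aux

variable {d : ℕ}

lemma aux_le1 : (1 : WithTop ℕ∞) ≤ ((⊤ : ℕ∞) : WithTop ℕ∞) := by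
  exact_mod_cast le_top

lemma aux_leadd : ((⊤ : ℕ∞) : WithTop ℕ∞) + 1 ≤ ((⊤ : ℕ∞) : WithTop ℕ∞) := by
  have h : ((⊤ : ℕ∞) + 1 : ℕ∞) = (⊤ : ℕ∞) := by simp
  calc ((⊤ : ℕ∞) : WithTop ℕ∞) + 1 = (((⊤ : ℕ∞) + 1 : ℕ∞) : WithTop ℕ∞) := by push_cast; rfl
    _ ≤ ((⊤ : ℕ∞) : WithTop ℕ∞) := by rw [h]

/-- The `j`-th coordinate projection as a continuous linear map. -/
noncomputable def proj' (j : Fin d) : (Fin d → ℝ) →L[ℝ] ℝ :=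
  ContinuousLinearMap.proj j

@[simp] lemma proj'_apply (j : Fin d) (y : Fin d → ℝ) : proj' j y = y j := rfl

lemma pder_contDiff {f : (Fin d → ℝ) → ℝ} (hf : ContDiff ℝ (⊤ : ℕ∞) f) (i : Fin d) :
    ContDiff ℝ (⊤ : ℕ∞) (pder i f) := by
  have h1 : ContDiff ℝ (⊤ : ℕ∞) (fderiv ℝ f) := hf.fderiv_right aux_leadd
  exact (ContinuousLinearMap.apply ℝ ℝ (Pi.single i 1)).contDiff.comp h1

lemma foldr_pder_contDiff {f : (Fin d → ℝ) → ℝ} (hf : ContDiff ℝ (⊤ : ℕ∞) f)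
    (l : List (Fin d)) : ContDiff ℝ (⊤ : ℕ∞) (l.foldr pder f) := by
  induction l with
  | nil => exact hf
  | cons i l ih => exact pder_contDiff ih i

lemma hasFDerivAt_G (g : Fin d → ℝ → ℝ) (hg : ∀ i, ContDiff ℝ (⊤ : ℕ∞) (g i))
    (y : Fin d → ℝ) :
    HasFDerivAt (fun (y : Fin d → ℝ) (i : Fin d) => g i (y i))
      (ContinuousLinearMap.pi fun j => deriv (g j) (y j) • proj' j) y := by
  refine hasFDerivAt_pi.2 fun j => ?_
  have h1 : HasDerivAt (g j) (deriv (g j) (y j)) (y j) :=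
    ((hg j).differentiable (lt_of_lt_of_le zero_lt_one aux_le1).ne' (y j)).hasDerivAt
  exact h1.comp_hasFDerivAt y (proj' j).hasFDerivAt

lemma G_contDiff (g : Fin d → ℝ → ℝ) (hg : ∀ i, ContDiff ℝ (⊤ : ℕ∞) (g i)) :
    ContDiff ℝ (⊤ : ℕ∞) (fun (y : Fin d → ℝ) (i : Fin d) => g i (y i)) := by
  refine contDiff_pi.2 fun j => ?_
  exact (hg j).comp (proj' j).contDiff

/-- Chain rule for `pder` of a coordinatewise composition. -/
lemma pder_comp (g : Fin d → ℝ → ℝ) (hg : ∀ i, ContDiff ℝ (⊤ : ℕ∞) (g i))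
    {H : (Fin d → ℝ) → ℝ} (hH : ContDiff ℝ (⊤ : ℕ∞) H) (i : Fin d)
    (y : Fin d → ℝ) :
    pder i (fun y => H (fun j => g j (y j))) y =
      pder i H (fun j => g j (y j)) * deriv (g i) (y i) := by
  have hG := hasFDerivAt_G g hg y
  have hH' : HasFDerivAt H (fderiv ℝ H (fun j => g j (y j))) (fun j => g j (y j)) :=
    (hH.differentiable (lt_of_lt_of_le zero_lt_one aux_le1).ne' _).hasFDerivAt
  have hcomp : HasFDerivAt (fun y : Fin d → ℝ => H (fun j => g j (y j)))
      ((fderiv ℝ H (fun j => g j (y j))).comp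
        (ContinuousLinearMap.pi fun j => deriv (g j) (y j) • proj' j)) y :=
    hH'.comp y hG
  have h1 : (ContinuousLinearMap.pi fun j => deriv (g j) (y j) • proj' j) (Pi.single i 1)
      = Pi.single i (deriv (g i) (y i)) := by
    funext j
    by_cases hji : j = i
    · subst hji; simp
    · simp [Pi.single_apply, hji]
  have h2 : (Pi.single i (deriv (g i) (y i)) : Fin d → ℝ)
      = deriv (g i) (y i) • (Pi.single i 1 : Fin d → ℝ) := by
    funext j
    by_cases hji : j = i
    · subst hji; simp
    · simp [Pi.single_apply, hji]
  calc pder i (fun y => H (fun j => g j (y j))) y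
      = fderiv ℝ (fun y : Fin d → ℝ => H (fun j => g j (y j))) y (Pi.single i 1) := rfl
    _ = fderiv ℝ H (fun j => g j (y j)) (Pi.single i (deriv (g i) (y i))) := by
        rw [hcomp.fderiv, ContinuousLinearMap.comp_apply, h1]
    _ = deriv (g i) (y i) * fderiv ℝ H (fun j => g j (y j)) (Pi.single i 1) := by
        rw [h2, map_smul]; simp
    _ = pder i H (fun j => g j (y j)) * deriv (g i) (y i) := mul_comm _ _

/-- The product of derivatives of the `g j` over a list of indices. -/
noncomputable def cprod (g : Fin d → ℝ → ℝ) (l : List (Fin d)) : (Fin d → ℝ) → ℝ :=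
  fun y => (l.map fun j => deriv (g j) (y j)).prod

lemma cprod_contDiff (g : Fin d → ℝ → ℝ) (hg : ∀ i, ContDiff ℝ (⊤ : ℕ∞) (g i))
    (l : List (Fin d)) : ContDiff ℝ (⊤ : ℕ∞) (cprod g l) := by
  induction l with
  | nil => exact contDiff_const
  | cons j l ih =>
      have hdg : ContDiff ℝ (⊤ : ℕ∞) (deriv (g j)) := (contDiff_infty_iff_deriv.1 (hg j)).2
      have h1 : ContDiff ℝ (⊤ : ℕ∞) (fun y : Fin d → ℝ => deriv (g j) (y j)) :=
        hdg.comp (proj' j).contDiff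
      exact h1.mul ih

lemma pder_single_var {φ : ℝ → ℝ} (hφ : ContDiff ℝ (⊤ : ℕ∞) φ) {i j : Fin d} (hij : i ≠ j)
    (y : Fin d → ℝ) : pder i (fun y => φ (y j)) y = 0 := by
  have h1 : HasDerivAt φ (deriv φ (y j)) (y j) :=
    (hφ.differentiable (lt_of_lt_of_le zero_lt_one aux_le1).ne' (y j)).hasDerivAt
  have h2 : HasFDerivAt (fun y : Fin d → ℝ => φ (y j))
      (deriv φ (y j) • proj' j) y :=
    h1.comp_hasFDerivAt y (proj' j).hasFDerivAt
  have h3 : pder i (fun y => φ (y j)) y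
      = (deriv φ (y j) • proj' j) (Pi.single i 1) := by
    show fderiv ℝ (fun y : Fin d → ℝ => φ (y j)) y (Pi.single i 1) = _
    rw [h2.fderiv]
  rw [h3]
  have hj0 : (Pi.single i (1 : ℝ) : Fin d → ℝ) j = 0 := Pi.single_eq_of_ne (Ne.symm hij) 1
  simp [hj0]

lemma pder_cprod_eq_zero (g : Fin d → ℝ → ℝ) (hg : ∀ i, ContDiff ℝ (⊤ : ℕ∞) (g i))
    {l : List (Fin d)} {i : Fin d} (hi : i ∉ l) (y : Fin d → ℝ) :
    pder i (cprod g l) y = 0 := by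
  induction l with
  | nil =>
      have h0 : cprod g ([] : List (Fin d)) = fun _ => (1 : ℝ) := rfl
      rw [h0]; simp [pder]
  | cons j l ih =>
      have hij : i ≠ j := fun h => hi (h ▸ (List.mem_cons_self : j ∈ j :: l))
      have hil : i ∉ l := fun h => hi (List.mem_cons_of_mem j h)
      have hdg : ContDiff ℝ (⊤ : ℕ∞) (deriv (g j)) := (contDiff_infty_iff_deriv.1 (hg j)).2
      have hfac : DifferentiableAt ℝ (fun y : Fin d → ℝ => deriv (g j) (y j)) y :=
        ((hdg.comp (proj' j).contDiff).differentiable (lt_of_lt_of_le zero_lt_one aux_le1).ne' y)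
      have hrest : DifferentiableAt ℝ (cprod g l) y :=
        ((cprod_contDiff g hg l).differentiable (lt_of_lt_of_le zero_lt_one aux_le1).ne' y)
      have hcons : cprod g (j :: l) = fun y => deriv (g j) (y j) * cprod g l y := rfl
      rw [hcons]
      have hmul := fderiv_fun_mul (𝕜 := ℝ) hfac hrest
      show fderiv ℝ (fun y => deriv (g j) (y j) * cprod g l y) y (Pi.single i 1) = 0
      rw [hmul]
      have hl0 : fderiv ℝ (cprod g l) y (Pi.single i 1) = 0 := ih hil
      have hf0 : fderiv ℝ (fun y : Fin d → ℝ => deriv (g j) (y j)) y (Pi.single i 1) = 0 :=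
        pder_single_var hdg hij y
      simp [hl0, hf0]

lemma key (g : Fin d → ℝ → ℝ) (hg : ∀ i, ContDiff ℝ (⊤ : ℕ∞) (g i))
    (s : (Fin d → ℝ) → ℝ) (hs : ContDiff ℝ (⊤ : ℕ∞) s)
    (l : List (Fin d)) (hl : l.Nodup) (y : Fin d → ℝ) :
    (l.foldr pder (fun y => s (fun j => g j (y j)))) y =
      (l.foldr pder s) (fun j => g j (y j)) * cprod g l y := by
  induction l generalizing y with
  | nil => simp [cprod]
  | cons i l ih =>
      have hil : i ∉ l := (List.nodup_cons.1 hl).1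
      have hlnd : l.Nodup := (List.nodup_cons.1 hl).2
      set H : (Fin d → ℝ) → ℝ := l.foldr pder s with hHdef
      have hH : ContDiff ℝ (⊤ : ℕ∞) H := foldr_pder_contDiff hs l
      have heq : l.foldr pder (fun y => s (fun j => g j (y j)))
          = fun y => H (fun j => g j (y j)) * cprod g l y := funext fun y => ih hlnd y
      have hstep : (List.foldr pder (fun y => s fun j => g j (y j)) (i :: l)) y
          = pder i (fun y => H (fun j => g j (y j)) * cprod g l y) y := by
        show pder i (l.foldr pder (fun y => s (fun j => g j (y j)))) y = _
        rw [heq]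
      rw [hstep]
      have hcompd : DifferentiableAt ℝ (fun y : Fin d → ℝ => H (fun j => g j (y j))) y :=
        ((hH.comp (G_contDiff g hg)).differentiable (lt_of_lt_of_le zero_lt_one aux_le1).ne' y)
      have hrest : DifferentiableAt ℝ (cprod g l) y :=
        ((cprod_contDiff g hg l).differentiable (lt_of_lt_of_le zero_lt_one aux_le1).ne' y)
      have hmul := fderiv_fun_mul (𝕜 := ℝ) hcompd hrest
      have hsplit : pder i (fun y => H (fun j => g j (y j)) * cprod g l y) y
          = pder i (fun y : Fin d → ℝ => H (fun j => g j (y j))) y * cprod g l y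
            + H (fun j => g j (y j)) * pder i (cprod g l) y := by
        show fderiv ℝ (fun y => H (fun j => g j (y j)) * cprod g l y) y (Pi.single i 1) = _
        rw [hmul]
        simp only [ContinuousLinearMap.add_apply, ContinuousLinearMap.smul_apply,
          smul_eq_mul, pder]
        ring
      rw [hsplit, pder_cprod_eq_zero g hg hil, pder_comp g hg hH i y]
      have hcp : cprod g (i :: l) y = deriv (g i) (y i) * cprod g l y := rfl
      show _ = pder i H (fun j => g j (y j)) * cprod g (i :: l) y
      rw [hcp]
      ring

end Aux

/-- If a smooth `s : ℝ^d → ℝ` satisfies `∂_1⋯∂_d s = ∏_i ∂_i s`, then for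
all smooth `s_1,…,s_d : ℝ → ℝ`, the function `u(x) = s(s_1(x_1),…,s_d(x_d))` satisfies the
same equation. -/
theorem mixedDer_comp (d : ℕ) (hd : 2 ≤ d) (s : (Fin d → ℝ) → ℝ)
    (hs : ContDiff ℝ (⊤ : ℕ∞) s)
    (hpde : ∀ x, mixedDer s x = ∏ i : Fin d, pder i s x)
    (g : Fin d → ℝ → ℝ) (hg : ∀ i, ContDiff ℝ (⊤ : ℕ∞) (g i)) :
    ∀ x : Fin d → ℝ,
      mixedDer (fun y => s (fun i => g i (y i))) x =
        ∏ i : Fin d, pder i (fun y => s (fun j => g j (y j))) x := by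
  intro x
  have hkey := key g hg s hs (List.finRange d) (List.nodup_finRange d) x
  have hcp : cprod g (List.finRange d) x = ∏ i : Fin d, deriv (g i) (x i) := by
    rw [Fin.prod_univ_def]; rfl
  have hmix : mixedDer s (fun j => g j (x j)) = ∏ i : Fin d, pder i s (fun j => g j (x j)) :=
    hpde _
  calc mixedDer (fun y => s (fun i => g i (y i))) x
      = mixedDer s (fun j => g j (x j)) * cprod g (List.finRange d) x := hkey
    _ = (∏ i : Fin d, pder i s (fun j => g j (x j))) * ∏ i : Fin d, deriv (g i) (x i) := by
        rw [hmix, hcp]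
    _ = ∏ i : Fin d, (pder i s (fun j => g j (x j)) * deriv (g i) (x i)) :=
        (Finset.prod_mul_distrib).symm
    _ = ∏ i : Fin d, pder i (fun y => s (fun j => g j (y j))) x := by
        refine Finset.prod_congr rfl fun i _ => ?_
        exact (pder_comp g hg hs i x).symm
end
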